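/- arXiv:0912.5018 — 5 statements merged into one kernel-verified Lean document; each statement's English description precedes it below -/
import Mathlib

section
/- Given two C^2-smooth functions f, g : ℝ → ℝ and T > 0, there exists a C^2-smooth function y : [0,T] × ℝ → ℝ satisfying the one-dimensional wave equation y_tt - y_xx = 0 on [0,T] × ℝ, with y(0,x) = f(x) and y(T,x) = g(x) for all x ∈ ℝ. -/
open Real Set

noncomputable section TBVPAux

/-- Smooth transition: `0` for `u ≤ 0`, `1` for `u ≥ 2T`. -/
def tbvpTh (T u : ℝ) : ℝ := Real.smoothTransition (u / (2 * T))

/-- The "discrepancy" function for the cohomological equation. -/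
def tbvpK (f g : ℝ → ℝ) (T u : ℝ) : ℝ := g (u + T) - (f (u + 2 * T) + f u) / 2

/-- Summands for the solution of `W(u+2T) - W(u) = K(u)`. -/
def tbvpA (f g : ℝ → ℝ) (T : ℝ) (n : ℤ) (u : ℝ) : ℝ :=
  (tbvpTh T (u - 2 * T * n) - if n < 0 then 1 else 0) * tbvpK f g T (u - 2 * T * (n + 1))

def tbvpN (T u : ℝ) : ℤ := ⌈|u| / (2 * T)⌉ + 1

/-- Solution of the cohomological equation, as a locally finite sum. -/
def tbvpW (f g : ℝ → ℝ) (T u : ℝ) : ℝ :=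
  ∑ n ∈ Finset.Icc (-(tbvpN T u)) (tbvpN T u), tbvpA f g T n u

variable {f g : ℝ → ℝ} {T : ℝ}

lemma tbvpTh_zero (hT : 0 < T) {u : ℝ} (h : u ≤ 0) : tbvpTh T u = 0 :=
  Real.smoothTransition.zero_of_nonpos (div_nonpos_iff.mpr (Or.inr ⟨h, by linarith⟩))

lemma tbvpTh_one (hT : 0 < T) {u : ℝ} (h : 2 * T ≤ u) : tbvpTh T u = 1 :=
  Real.smoothTransition.one_of_one_le ((one_le_div (by linarith)).mpr h)

lemma tbvpA_eq_zero (hT : 0 < T) {n : ℤ} {u : ℝ}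
    (h : |u| + 2 * T < 2 * T * |(n : ℝ)|) : tbvpA f g T n u = 0 := by
  rcases lt_or_ge n 0 with hn | hn
  · have hcast : |(n : ℝ)| = -(n : ℝ) := abs_of_neg (by exact_mod_cast hn)
    rw [hcast] at h
    have h1 : 2 * T ≤ u - 2 * T * n := by nlinarith [neg_abs_le u]
    simp [tbvpA, tbvpTh_one hT h1, hn]
  · have hcast : |(n : ℝ)| = (n : ℝ) := abs_of_nonneg (by exact_mod_cast hn)
    rw [hcast] at h
    have h1 : u - 2 * T * n ≤ 0 := by nlinarith [le_abs_self u]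
    simp [tbvpA, tbvpTh_zero hT h1, if_neg (not_lt.mpr hn)]

lemma tbvpN_nonneg (hT : 0 < T) (u : ℝ) : 0 ≤ tbvpN T u := by
  have : (0 : ℤ) ≤ ⌈|u| / (2 * T)⌉ := Int.ceil_nonneg (by positivity)
  unfold tbvpN; omega

lemma tbvpA_eq_zero' (hT : 0 < T) {n : ℤ} {u : ℝ} (h : tbvpN T u < |n|) :
    tbvpA f g T n u = 0 := by
  apply tbvpA_eq_zero hT
  have h1 : (tbvpN T u : ℝ) + 1 ≤ ((|n| : ℤ) : ℝ) := by exact_mod_cast Int.add_one_le_iff.mpr h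
  have h2 : |u| / (2 * T) ≤ (⌈|u| / (2 * T)⌉ : ℝ) := Int.le_ceil _
  have h3 : ((tbvpN T u : ℤ) : ℝ) = (⌈|u| / (2 * T)⌉ : ℝ) + 1 := by
    unfold tbvpN; push_cast; ring
  have h4 : |u| / (2 * T) + 2 ≤ ((|n| : ℤ) : ℝ) := by rw [h3] at h1; linarith
  have h5 : |u| + 2 * 2 * T ≤ 2 * T * ((|n| : ℤ) : ℝ) := by
    have := (div_le_iff₀ (by linarith : (0:ℝ) < 2 * T)).mp
      (by linarith : |u| / (2 * T) ≤ ((|n| : ℤ) : ℝ) - 2)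
    nlinarith
  have hc : ((|n| : ℤ) : ℝ) = |(n : ℝ)| := by push_cast; rfl
  rw [hc] at h5
  linarith

lemma tbvp_sum_stable (hT : 0 < T) {u : ℝ} {M : ℤ} (hM : tbvpN T u ≤ M) :
    ∑ n ∈ Finset.Icc (-M) M, tbvpA f g T n u = tbvpW f g T u := by
  unfold tbvpW
  refine (Finset.sum_subset ?_ ?_).symm
  · intro n hn
    simp only [Finset.mem_Icc] at hn ⊢
    omega
  · intro n hn hn'
    simp only [Finset.mem_Icc] at hn hn'
    apply tbvpA_eq_zero' hT
    rcases abs_cases n with ⟨h1, _⟩ | ⟨h1, _⟩ <;> omega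

lemma tbvpA_shift (hT : 0 < T) (n : ℤ) (u : ℝ) :
    tbvpA f g T n (u + 2 * T) = tbvpA f g T (n - 1) u + (if n = 0 then tbvpK f g T u else 0) := by
  have e1 : u + 2 * T - 2 * T * n = u - 2 * T * ((n : ℝ) - 1) := by ring
  have e2 : u + 2 * T - 2 * T * ((n : ℝ) + 1) = u - 2 * T * (((n : ℝ) - 1) + 1) := by ring
  unfold tbvpA
  push_cast
  rw [e1, e2]
  rcases lt_trichotomy n 0 with hn | hn | hn
  · rw [if_pos hn, if_pos (by omega : n - 1 < 0), if_neg (by omega : ¬ n = 0)]; ring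
  · subst hn
    rw [if_neg (by omega), if_pos (by omega : (0:ℤ) - 1 < 0), if_pos rfl]
    have : u - 2 * T * (((0:ℤ) : ℝ) - 1 + 1) = u := by push_cast; ring
    rw [this]; ring
  · rw [if_neg (by omega : ¬ n < 0), if_neg (by omega : ¬ n - 1 < 0), if_neg (by omega : ¬ n = 0)]
    ring

lemma tbvpW_shift (hT : 0 < T) (u : ℝ) :
    tbvpW f g T (u + 2 * T) = tbvpW f g T u + tbvpK f g T u := by
  set M : ℤ := max (tbvpN T u) (tbvpN T (u + 2 * T)) + 1 with hM
  have hMu : tbvpN T u ≤ M := by have := le_max_left (tbvpN T u) (tbvpN T (u + 2*T)); omega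
  have hMv : tbvpN T (u + 2 * T) ≤ M := by
    have := le_max_right (tbvpN T u) (tbvpN T (u + 2*T)); omega
  have hM0 : 0 ≤ M := le_trans (tbvpN_nonneg hT u) hMu
  rw [← tbvp_sum_stable hT hMv]
  have key : ∑ n ∈ Finset.Icc (-M) M, tbvpA f g T n (u + 2 * T)
      = (∑ n ∈ Finset.Icc (-M) M, tbvpA f g T (n - 1) u) + tbvpK f g T u := by
    rw [Finset.sum_congr rfl (fun n _ => tbvpA_shift hT n u), Finset.sum_add_distrib]
    congr 1
    rw [Finset.sum_ite_eq' (Finset.Icc (-M) M) (0 : ℤ) (fun _ => tbvpK f g T u)]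
    simp [Finset.mem_Icc, hM0, neg_nonpos.mpr hM0]
  rw [key]
  congr 1
  have : ∑ n ∈ Finset.Icc (-M) M, tbvpA f g T (n - 1) u
      = ∑ m ∈ Finset.Icc (-M - 1) (M - 1), tbvpA f g T m u := by
    rw [show Finset.Icc (-M - 1) (M - 1) = (Finset.Icc (-M) M).map (addRightEmbedding (-1)) by
      rw [Finset.map_add_right_Icc]; congr 1 <;> ring,
      Finset.sum_map]
    rfl
  rw [this, ← tbvp_sum_stable hT (show tbvpN T u ≤ M - 1 from by omega)]
  refine (Finset.sum_subset ?_ ?_).symm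
  · intro n hn; simp only [Finset.mem_Icc] at hn ⊢; omega
  · intro n hn hn'
    simp only [Finset.mem_Icc] at hn hn'
    apply tbvpA_eq_zero' hT
    rcases abs_cases n with ⟨h1, _⟩ | ⟨h1, _⟩ <;> omega

lemma tbvpK_contDiff (hf : ContDiff ℝ 2 f) (hg : ContDiff ℝ 2 g) :
    ContDiff ℝ 2 (tbvpK f g T) := by
  unfold tbvpK
  exact (hg.comp (contDiff_id.add contDiff_const)).sub
    (((hf.comp (contDiff_id.add contDiff_const)).add hf).div_const 2)

lemma tbvpA_contDiff (hT : 0 < T) (hf : ContDiff ℝ 2 f) (hg : ContDiff ℝ 2 g) (n : ℤ) :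
    ContDiff ℝ 2 (tbvpA f g T n) := by
  unfold tbvpA
  refine ContDiff.mul ?_ ?_
  · exact ((Real.smoothTransition.contDiff.comp
      ((contDiff_id.sub contDiff_const).div_const _)).sub contDiff_const)
  · exact (tbvpK_contDiff hf hg).comp (contDiff_id.sub contDiff_const)

lemma tbvpN_mono (hT : 0 < T) {u v : ℝ} (h : |u| ≤ |v|) : tbvpN T u ≤ tbvpN T v := by
  unfold tbvpN
  have : |u| / (2 * T) ≤ |v| / (2 * T) :=
    div_le_div_of_nonneg_right h (by linarith) |>.trans_eq rfl
  exact add_le_add_left (Int.ceil_le_ceil this) 1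

lemma tbvpW_contDiff (hT : 0 < T) (hf : ContDiff ℝ 2 f) (hg : ContDiff ℝ 2 g) :
    ContDiff ℝ 2 (tbvpW f g T) := by
  rw [contDiff_iff_contDiffAt]
  intro u₀
  set M : ℤ := tbvpN T (|u₀| + 1) with hMdef
  have hsum : ContDiff ℝ 2 (fun u => ∑ n ∈ Finset.Icc (-M) M, tbvpA f g T n u) :=
    ContDiff.sum fun n _ => tbvpA_contDiff hT hf hg n
  refine hsum.contDiffAt.congr_of_eventuallyEq ?_
  have hball : Metric.ball u₀ 1 ∈ nhds u₀ := Metric.ball_mem_nhds u₀ one_pos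
  filter_upwards [hball] with u hu
  simp only [Metric.mem_ball, Real.dist_eq] at hu
  have hu' : |u| ≤ |(|u₀| + 1)| := by
    rw [abs_of_nonneg (by positivity : (0:ℝ) ≤ |u₀| + 1)]
    calc |u| = |u₀ + (u - u₀)| := by ring_nf
    _ ≤ |u₀| + |u - u₀| := abs_add_le _ _
    _ ≤ |u₀| + 1 := by linarith
  exact (tbvp_sum_stable hT (tbvpN_mono hT hu')).symm

/-- The wave equation for `F(x+t) + G(x-t)` with `F, G` of class `C²`. -/
lemma tbvp_wave_pde {F G : ℝ → ℝ} (hF : ContDiff ℝ 2 F) (hG : ContDiff ℝ 2 G) (t x : ℝ) :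
    deriv (deriv (fun s => F (x + s) + G (x - s))) t
      - deriv (deriv (fun s => F (s + t) + G (s - t))) x = 0 := by
  have hF1 : Differentiable ℝ F := hF.differentiable two_ne_zero
  have hG1 : Differentiable ℝ G := hG.differentiable two_ne_zero
  have hF2 : ContDiff ℝ 1 (deriv F) := by
    have := (contDiff_succ_iff_deriv (n := 1)).mp (by exact_mod_cast hF)
    exact this.2.2
  have hG2 : ContDiff ℝ 1 (deriv G) := by
    have := (contDiff_succ_iff_deriv (n := 1)).mp (by exact_mod_cast hG)
    exact this.2.2
  have hF2' : Differentiable ℝ (deriv F) := hF2.differentiable one_ne_zero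
  have hG2' : Differentiable ℝ (deriv G) := hG2.differentiable one_ne_zero
  have h1 : ∀ s : ℝ, DifferentiableAt ℝ (fun s => F (x + s)) s := by fun_prop
  have h2 : ∀ s : ℝ, DifferentiableAt ℝ (fun s => G (x - s)) s := by fun_prop
  have h3 : ∀ s : ℝ, DifferentiableAt ℝ (fun s => F (s + t)) s := by fun_prop
  have h4 : ∀ s : ℝ, DifferentiableAt ℝ (fun s => G (s - t)) s := by fun_prop
  have dt1 : deriv (fun s => F (x + s) + G (x - s))
      = fun s => deriv F (x + s) - deriv G (x - s) := by
    funext s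
    rw [deriv_fun_add (h1 s) (h2 s), deriv_comp_const_add, deriv_comp_const_sub]
    ring
  have dx1 : deriv (fun s => F (s + t) + G (s - t))
      = fun s => deriv F (s + t) + deriv G (s - t) := by
    funext s
    rw [deriv_fun_add (h3 s) (h4 s), deriv_comp_add_const, deriv_comp_sub_const]
  have h5 : DifferentiableAt ℝ (fun s => deriv F (x + s)) t := by fun_prop
  have h6 : DifferentiableAt ℝ (fun s => deriv G (x - s)) t := by fun_prop
  have h7 : DifferentiableAt ℝ (fun s => deriv F (s + t)) x := by fun_prop
  have h8 : DifferentiableAt ℝ (fun s => deriv G (s - t)) x := by fun_prop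
  rw [dt1, dx1, deriv_fun_sub h5 h6, deriv_comp_const_add, deriv_comp_const_sub,
    deriv_fun_add h7 h8, deriv_comp_add_const, deriv_comp_sub_const]
  ring

end TBVPAux

/-- TBVP for the 1D wave equation: given C² data `f`, `g` and `T > 0`, there is a
C² function `y` on `[0,T] × ℝ` with `y_tt - y_xx = 0`, `y(0,x) = f x`, `y(T,x) = g x`. -/
theorem tbvp_wave_1d (f g : ℝ → ℝ) (hf : ContDiff ℝ 2 f) (hg : ContDiff ℝ 2 g)
    (T : ℝ) (hT : 0 < T) :
    ∃ y : ℝ → ℝ → ℝ,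
      ContDiffOn ℝ 2 (fun p : ℝ × ℝ => y p.1 p.2) (Set.Icc 0 T ×ˢ Set.univ) ∧
      (∀ t ∈ Set.Icc (0:ℝ) T, ∀ x : ℝ,
        deriv (deriv (fun s => y s x)) t - deriv (deriv (fun s => y t s)) x = 0) ∧
      (∀ x : ℝ, y 0 x = f x) ∧
      (∀ x : ℝ, y T x = g x) := by
  classical
  set W : ℝ → ℝ := tbvpW f g T with hWdef
  have hW : ContDiff ℝ 2 W := tbvpW_contDiff hT hf hg
  set F : ℝ → ℝ := fun u => f u / 2 + W u with hFdef
  set G : ℝ → ℝ := fun u => f u / 2 - W u with hGdef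
  have hF : ContDiff ℝ 2 F := (hf.div_const 2).add hW
  have hG : ContDiff ℝ 2 G := (hf.div_const 2).sub hW
  refine ⟨fun t x => F (x + t) + G (x - t), ?_, ?_, ?_, ?_⟩
  · have : ContDiff ℝ 2 (fun p : ℝ × ℝ => F (p.2 + p.1) + G (p.2 - p.1)) :=
      (hF.comp (contDiff_snd.add contDiff_fst)).add (hG.comp (contDiff_snd.sub contDiff_fst))
    exact this.contDiffOn
  · intro t _ x
    exact tbvp_wave_pde hF hG t x
  · intro x
    simp only [add_zero, sub_zero, hFdef, hGdef]
    ring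
  · intro x
    have key : W (x - T + 2 * T) = W (x - T) + tbvpK f g T (x - T) := tbvpW_shift hT (x - T)
    have e1 : x - T + 2 * T = x + T := by ring
    have e2 : x - T + T = x := by ring
    have e3 : x - T + 2 * T = x + T := by ring
    rw [e1] at key
    simp only [hFdef, hGdef]
    rw [key]
    unfold tbvpK
    rw [e2, e3]
    ring
end

section
/- Let T > 0 and let f̃ : ℝ → ℝ be C^2. Define v : ℝ → ℝ by v(x) = u(x − 2NT) + 2·∑_{i=1}^{N} f̃'(x − (2i−1)T) for x ≥ 0 and v(x) = u(x + 2NT) − 2·∑_{i=1}^{N} f̃'(x + (2i−1)T) for x < 0, where N = ⌈(|x|+T)/(2T)⌉ (adjusted so that x − 2NT ∈ [−T,T] for x ≥ 0, resp. x + 2NT ∈ [−T,T] for x < 0), and u : [−T,T] → ℝ is a C^1 function satisfying ∫_{−T}^{T} u(τ)dτ = 2f̃(0), u(T) − u(−T) = 2f̃'(0), and u'₋(T) − u'₊(−T) = 2f̃''(0). Then v is C^1 on ℝ. -/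
set_option maxHeartbeats 1000000

open Real Set

def Ppiece (T : ℝ) (w h : ℝ → ℝ) (k : ℕ) (x : ℝ) : ℝ :=
  w (x - 2 * (k : ℝ) * T) + 2 * ∑ i ∈ Finset.range k, h (x - (2 * (i : ℝ) + 1) * T)

lemma Ppiece_def (T : ℝ) (w h : ℝ → ℝ) (k : ℕ) :
    Ppiece T w h k = fun x =>
      w (x - 2 * (k : ℝ) * T) + 2 * ∑ i ∈ Finset.range k, h (x - (2 * (i : ℝ) + 1) * T) := rfl

lemma Ppiece_succ_eq (T : ℝ) (w h : ℝ → ℝ) (k : ℕ) (hw : w T - w (-T) = 2 * h 0) :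
    Ppiece T w h (k + 1) ((2 * (k : ℝ) + 1) * T) = Ppiece T w h k ((2 * (k : ℝ) + 1) * T) := by
  simp only [Ppiece, Finset.sum_range_succ, Nat.cast_add, Nat.cast_one]
  rw [show (2 * (k : ℝ) + 1) * T - 2 * ((k : ℝ) + 1) * T = -T by ring,
    show (2 * (k : ℝ) + 1) * T - 2 * (k : ℝ) * T = T by ring,
    show (2 * (k : ℝ) + 1) * T - (2 * (k : ℝ) + 1) * T = 0 by ring]
  linarith

lemma contOn_glue {f g : ℝ → ℝ} {a b c : ℝ}
    (hf : ContinuousOn f (Icc a b)) (hg : ContinuousOn g (Icc b c)) (hfg : f b = g b) :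
    ContinuousOn (fun x => if x ≤ b then f x else g x) (Icc a c) := by
  have hcl : closure {x : ℝ | x ≤ b} = Iic b := by
    rw [show {x : ℝ | x ≤ b} = Iic b from rfl, closure_Iic]
  have hcl' : closure {x : ℝ | ¬ x ≤ b} = Ici b := by
    have : {x : ℝ | ¬ x ≤ b} = Ioi b := by ext y; simp
    rw [this, closure_Ioi]
  apply ContinuousOn.if
  · intro x hx
    have hxb : x = b := by
      have := hx.2
      rw [show {x : ℝ | x ≤ b} = Iic b from rfl, frontier_Iic] at this
      simpa using this
    subst hxb; simp [hfg]
  · rw [hcl]; exact hf.mono fun y hy => ⟨hy.1.1, hy.2⟩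
  · rw [hcl']; exact hg.mono fun y hy => ⟨hy.2, hy.1.2⟩

lemma aux_pos (T : ℝ) (hT : 0 < T) (ft : ℝ → ℝ) (hft : ContDiff ℝ 2 ft)
    (u : ℝ → ℝ) (hu : ContDiffOn ℝ 1 u (Set.Icc (-T) T))
    (hu2 : u T - u (-T) = 2 * deriv ft 0)
    (hu3 : derivWithin u (Set.Icc (-T) T) T - derivWithin u (Set.Icc (-T) T) (-T)
            = 2 * deriv (deriv ft) 0)
    (N : ℝ → ℕ)
    (hN1 : ∀ x : ℝ, 0 ≤ x → x - 2 * (N x : ℝ) * T ∈ Set.Icc (-T) T)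
    (hN2 : ∀ x : ℝ, x < 0 → x + 2 * (N x : ℝ) * T ∈ Set.Icc (-T) T)
    (v : ℝ → ℝ)
    (hv1 : ∀ x : ℝ, 0 ≤ x →
      v x = u (x - 2 * (N x : ℝ) * T)
            + 2 * ∑ i ∈ Finset.range (N x), deriv ft (x - (2 * (i : ℝ) + 1) * T))
    (hv2 : ∀ x : ℝ, x < 0 →
      v x = u (x + 2 * (N x : ℝ) * T)
            - 2 * ∑ i ∈ Finset.range (N x), deriv ft (x + (2 * (i : ℝ) + 1) * T)) :
    ∀ x₀ : ℝ, 0 ≤ x₀ → ContDiffAt ℝ 1 v x₀ := by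
  have hTT : -T < T := by linarith
  have hUD : UniqueDiffOn ℝ (Icc (-T) T) := uniqueDiffOn_Icc hTT
  set u' := derivWithin u (Icc (-T) T) with hu'def
  have hud : ∀ y ∈ Icc (-T) T, HasDerivWithinAt u (u' y) (Icc (-T) T) y :=
    fun y hy => ((hu.differentiableOn one_ne_zero) y hy).hasDerivWithinAt
  have huc : ContinuousOn u' (Icc (-T) T) := hu.continuousOn_derivWithin hUD le_rfl
  have hgC : ContDiff ℝ 1 (deriv ft) := by
    rw [show (2 : WithTop ℕ∞) = 1 + 1 by norm_num] at hft
    exact (contDiff_succ_iff_deriv.mp hft).2.2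
  have hgd : Differentiable ℝ (deriv ft) := hgC.differentiable one_ne_zero
  have hg'c : Continuous (deriv (deriv ft)) := hgC.continuous_deriv le_rfl
  -- derivative of a piece
  have hPd : ∀ (k : ℕ) (x : ℝ), x - 2 * (k : ℝ) * T ∈ Icc (-T) T →
      HasDerivWithinAt (Ppiece T u (deriv ft) k) (Ppiece T u' (deriv (deriv ft)) k x)
        (Icc ((2 * (k : ℝ) - 1) * T) ((2 * (k : ℝ) + 1) * T)) x := by
    intro k x hx
    have h1 : HasDerivWithinAt (fun y => u (y - 2 * (k : ℝ) * T))
        (u' (x - 2 * (k : ℝ) * T) * 1)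
        (Icc ((2 * (k : ℝ) - 1) * T) ((2 * (k : ℝ) + 1) * T)) x := by
      refine HasDerivWithinAt.comp (h₂ := u) (h := fun y => y - 2 * (k : ℝ) * T) x
        (hud _ hx) (hasDerivWithinAt_id x _ |>.sub_const _) ?_
      intro y hy
      simp only [mem_Icc] at hy ⊢
      constructor <;> nlinarith [hy.1, hy.2]
    have h2 : HasDerivAt (fun y => 2 * ∑ i ∈ Finset.range k, deriv ft (y - (2 * (i : ℝ) + 1) * T))
        (2 * ∑ i ∈ Finset.range k, deriv (deriv ft) (x - (2 * (i : ℝ) + 1) * T)) x := by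
      refine HasDerivAt.const_mul 2 (HasDerivAt.fun_sum fun i _ => ?_)
      have := ((hgd (x - (2 * (i : ℝ) + 1) * T)).hasDerivAt).comp x
        ((hasDerivAt_id x).sub_const ((2 * (i : ℝ) + 1) * T))
      rw [mul_one] at this; exact this
    have := h1.fun_add h2.hasDerivWithinAt
    rw [mul_one] at this; exact this
  -- forcing
  have hNpos : ∀ (k : ℕ) (x : ℝ), (2 * (k : ℝ) - 1) * T < x → x < (2 * (k : ℝ) + 1) * T →
      0 ≤ x → N x = k := by
    intro k x h1 h2 hx
    obtain ⟨hl, hr⟩ := hN1 x hx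
    have h3 : (N x : ℝ) < (k : ℝ) + 1 := by nlinarith
    have h4 : (k : ℝ) < (N x : ℝ) + 1 := by nlinarith
    have h3' : N x < k + 1 := by exact_mod_cast h3
    have h4' : k < N x + 1 := by exact_mod_cast h4
    omega
  have hvP : ∀ (k : ℕ) (x : ℝ), (2 * (k : ℝ) - 1) * T < x → x < (2 * (k : ℝ) + 1) * T →
      v x = Ppiece T u (deriv ft) k x := by
    intro k x h1 h2
    rcases le_or_gt 0 x with hx | hx
    · rw [hv1 x hx, hNpos k x h1 h2 hx]; rfl
    · have hk : k = 0 := by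
        by_contra h
        have h1' : (1 : ℝ) ≤ (k : ℝ) := by exact_mod_cast Nat.one_le_iff_ne_zero.mpr h
        nlinarith
      subst hk
      have hN0 : N x = 0 := by
        obtain ⟨hl, hr⟩ := hN2 x hx
        by_contra h
        have h1' : (1 : ℝ) ≤ (N x : ℝ) := by exact_mod_cast Nat.one_le_iff_ne_zero.mpr h
        nlinarith
      rw [hv2 x hx, hN0]
      simp [Ppiece]
  have hvP' : ∀ k : ℕ,
      v ((2 * (k : ℝ) + 1) * T) = Ppiece T u (deriv ft) k ((2 * (k : ℝ) + 1) * T) := by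
    intro k
    set x := (2 * (k : ℝ) + 1) * T with hxdef
    have hx : 0 ≤ x := by positivity
    obtain ⟨hl, hr⟩ := hN1 x hx
    have h3 : (N x : ℝ) < (k : ℝ) + 2 := by nlinarith
    have h4 : (k : ℝ) < (N x : ℝ) + 1 := by nlinarith
    have h3' : N x < k + 2 := by exact_mod_cast h3
    have h4' : k < N x + 1 := by exact_mod_cast h4
    have hor : N x = k ∨ N x = k + 1 := by omega
    rw [hv1 x hx]
    rcases hor with h | h <;> rw [h]
    · rfl
    · exact Ppiece_succ_eq T u (deriv ft) k hu2
  -- interior case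
  have mainA : ∀ (k : ℕ) (x : ℝ), (2 * (k : ℝ) - 1) * T < x → x < (2 * (k : ℝ) + 1) * T →
      ContDiffAt ℝ 1 v x := by
    intro k x h1 h2
    have hmem : x - 2 * (k : ℝ) * T ∈ Ioo (-T) T := ⟨by nlinarith, by nlinarith⟩
    have hP : ContDiffAt ℝ 1 (Ppiece T u (deriv ft) k) x := by
      rw [Ppiece_def]
      apply ContDiffAt.add
      · have hux : ContDiffAt ℝ 1 u (x - 2 * (k : ℝ) * T) :=
          hu.contDiffAt (Icc_mem_nhds hmem.1 hmem.2)
        exact ContDiffAt.comp x hux ((contDiff_id.sub contDiff_const).contDiffAt)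
      · apply ContDiff.contDiffAt
        apply ContDiff.mul contDiff_const
        apply ContDiff.sum
        intro i _
        exact hgC.comp (contDiff_id.sub contDiff_const)
    exact hP.congr_of_eventuallyEq (Filter.eventuallyEq_of_mem
      (isOpen_Ioo.mem_nhds (⟨h1, h2⟩ : x ∈ Ioo _ _)) fun y hy => hvP k y hy.1 hy.2)
  -- gluing case
  have mainB : ∀ k : ℕ, ContDiffAt ℝ 1 v ((2 * (k : ℝ) + 1) * T) := by
    intro k
    set x₀ := (2 * (k : ℝ) + 1) * T with hx₀def
    set D : ℝ → ℝ := fun x => if x ≤ x₀ then Ppiece T u' (deriv (deriv ft)) k x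
      else Ppiece T u' (deriv (deriv ft)) (k + 1) x with hDdef
    have heqd : Ppiece T u' (deriv (deriv ft)) (k + 1) x₀
        = Ppiece T u' (deriv (deriv ft)) k x₀ := Ppiece_succ_eq T u' _ k hu3
    have hleft : ∀ y ∈ Icc (x₀ - T) x₀, v y = Ppiece T u (deriv ft) k y := by
      intro y hy
      obtain ⟨hy1, hy2⟩ := hy
      rcases eq_or_lt_of_le hy2 with he | hlt
      · rw [he]; exact hvP' k
      · refine hvP k y ?_ ?_
        · rw [hx₀def] at hy1; nlinarith
        · rw [hx₀def] at hlt; exact hlt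
    have hright : ∀ y ∈ Icc x₀ (x₀ + T), v y = Ppiece T u (deriv ft) (k + 1) y := by
      intro y hy
      obtain ⟨hy1, hy2⟩ := hy
      rcases eq_or_lt_of_le hy1 with he | hlt
      · rw [← he]
        calc v x₀ = Ppiece T u (deriv ft) k x₀ := hvP' k
          _ = Ppiece T u (deriv ft) (k + 1) x₀ := (Ppiece_succ_eq T u (deriv ft) k hu2).symm
      · refine hvP (k + 1) y ?_ ?_
        · push_cast; rw [hx₀def] at hlt; nlinarith
        · push_cast; rw [hx₀def] at hy2; nlinarith
    have key : ∀ x ∈ Ioo (x₀ - T) (x₀ + T), HasDerivAt v (D x) x := by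
      intro x hx
      obtain ⟨hxl, hxr⟩ := hx
      rcases lt_trichotomy x x₀ with h | h | h
      · have h1 : (2 * (k : ℝ) - 1) * T < x := by rw [hx₀def] at hxl; nlinarith
        have h2 : x < (2 * (k : ℝ) + 1) * T := by rw [← hx₀def]; exact h
        have hmem : x - 2 * (k : ℝ) * T ∈ Icc (-T) T := ⟨by nlinarith, by nlinarith⟩
        have hd := (hPd k x hmem).hasDerivAt (Icc_mem_nhds (by nlinarith) (by nlinarith))
        have he : v =ᶠ[nhds x] Ppiece T u (deriv ft) k :=
          Filter.eventuallyEq_of_mem (isOpen_Ioo.mem_nhds (⟨h1, h2⟩ : x ∈ Ioo _ _))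
            fun y hy => hvP k y hy.1 hy.2
        have hfinal := hd.congr_of_eventuallyEq he
        simp only [hDdef]
        rw [if_pos h.le]
        exact hfinal
      · rw [h]
        have e1 : x₀ - 2 * (k : ℝ) * T = T := by rw [hx₀def]; ring
        have e2 : x₀ - 2 * (((k + 1) : ℕ) : ℝ) * T = -T := by push_cast; rw [hx₀def]; ring
        have hdl : HasDerivWithinAt (Ppiece T u (deriv ft) k)
            (Ppiece T u' (deriv (deriv ft)) k x₀) (Icc (x₀ - T) x₀) x₀ := by
          refine (hPd k x₀ (by rw [e1]; exact right_mem_Icc.mpr hTT.le)).mono ?_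
          refine Icc_subset_Icc ?_ ?_ <;> rw [hx₀def] <;> nlinarith
        have hvl := hdl.congr hleft (hleft x₀ ⟨by linarith, le_rfl⟩)
        have hdr : HasDerivWithinAt (Ppiece T u (deriv ft) (k + 1))
            (Ppiece T u' (deriv (deriv ft)) (k + 1) x₀) (Icc x₀ (x₀ + T)) x₀ := by
          refine (hPd (k + 1) x₀ (by rw [e2]; exact left_mem_Icc.mpr hTT.le)).mono ?_
          refine Icc_subset_Icc ?_ ?_ <;> push_cast <;> rw [hx₀def] <;> nlinarith
        have hvr := hdr.congr hright (hright x₀ ⟨le_rfl, by linarith⟩)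
        rw [heqd] at hvr
        have hun := hvl.union hvr
        rw [Icc_union_Icc_eq_Icc (by linarith) (by linarith)] at hun
        have hfin := hun.hasDerivAt (Icc_mem_nhds (by linarith) (by linarith))
        simp only [hDdef]
        rw [if_pos le_rfl]
        exact hfin
      · have e3 : (2 * (((k + 1) : ℕ) : ℝ) - 1) * T = x₀ := by push_cast; rw [hx₀def]; ring
        have e4 : (2 * (((k + 1) : ℕ) : ℝ) + 1) * T = x₀ + 2 * T := by
          push_cast; rw [hx₀def]; ring
        have h1 : (2 * (((k + 1) : ℕ) : ℝ) - 1) * T < x := by rw [e3]; exact h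
        have h2 : x < (2 * (((k + 1) : ℕ) : ℝ) + 1) * T := by rw [e4]; linarith
        have hmem : x - 2 * (((k + 1) : ℕ) : ℝ) * T ∈ Icc (-T) T := by
          refine ⟨?_, ?_⟩ <;> push_cast <;> nlinarith
        have hd := (hPd (k + 1) x hmem).hasDerivAt (Icc_mem_nhds h1 h2)
        have he : v =ᶠ[nhds x] Ppiece T u (deriv ft) (k + 1) :=
          Filter.eventuallyEq_of_mem (isOpen_Ioo.mem_nhds (⟨h1, h2⟩ : x ∈ Ioo _ _))
            fun y hy => hvP (k + 1) y hy.1 hy.2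
        have hfin := hd.congr_of_eventuallyEq he
        simp only [hDdef]
        rw [if_neg (not_le.mpr h)]
        exact hfin
    -- continuity of the candidate derivative
    have cA : ContinuousOn (Ppiece T u' (deriv (deriv ft)) k) (Icc (x₀ - T) x₀) := by
      rw [Ppiece_def]
      apply ContinuousOn.add
      · refine huc.comp ((continuous_id.sub continuous_const).continuousOn) ?_
        intro y hy
        simp only [mem_Icc] at hy ⊢
        rw [hx₀def] at hy
        constructor <;> nlinarith [hy.1, hy.2]
      · exact (continuous_const.mul (continuous_finset_sum _ fun i _ =>
          hg'c.comp (continuous_id.sub continuous_const))).continuousOn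
    have cB : ContinuousOn (Ppiece T u' (deriv (deriv ft)) (k + 1)) (Icc x₀ (x₀ + T)) := by
      rw [Ppiece_def]
      apply ContinuousOn.add
      · refine huc.comp ((continuous_id.sub continuous_const).continuousOn) ?_
        intro y hy
        simp only [mem_Icc] at hy ⊢
        rw [hx₀def] at hy
        constructor <;> push_cast <;> nlinarith [hy.1, hy.2]
      · exact (continuous_const.mul (continuous_finset_sum _ fun i _ =>
          hg'c.comp (continuous_id.sub continuous_const))).continuousOn
    have Dcont : ContinuousOn D (Icc (x₀ - T) (x₀ + T)) := by
      rw [hDdef]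
      exact contOn_glue cA cB heqd.symm
    have h1 : ContDiffOn ℝ 1 v (Ioo (x₀ - T) (x₀ + T)) := by
      rw [show (1 : WithTop ℕ∞) = 0 + 1 from rfl, contDiffOn_succ_iff_deriv_of_isOpen isOpen_Ioo]
      refine ⟨fun x hx => ((key x hx).differentiableAt).differentiableWithinAt, by simp, ?_⟩
      rw [contDiffOn_zero]
      exact (Dcont.mono Ioo_subset_Icc_self).congr fun x hx => (key x hx).deriv
    exact h1.contDiffAt (Ioo_mem_nhds (by linarith) (by linarith))
  -- classification of points x₀ ≥ 0
  intro x₀ hx₀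
  set n : ℤ := ⌊(x₀ + T) / (2 * T)⌋ with hndef
  have h2T : (0 : ℝ) < 2 * T := by linarith
  have hfl : (n : ℝ) * (2 * T) ≤ x₀ + T := by
    rw [hndef]
    exact (le_div_iff₀ h2T).mp (Int.floor_le _)
  have hfu : x₀ + T < ((n : ℝ) + 1) * (2 * T) := by
    rw [hndef]
    exact (div_lt_iff₀ h2T).mp (Int.lt_floor_add_one _)
  have hn0 : 0 ≤ n := by
    rw [hndef]
    apply Int.floor_nonneg.mpr
    positivity
  rcases eq_or_lt_of_le hfl with he | hlt
  · -- x₀ = (2n-1)T, a gluing point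
    have hn1 : 1 ≤ n := by
      rcases eq_or_lt_of_le hn0 with h0 | h0
      · exfalso; rw [← h0] at he; push_cast at he; nlinarith
      · omega
    obtain ⟨k, hk⟩ : ∃ k : ℕ, n = (k : ℤ) + 1 := ⟨(n - 1).toNat, by omega⟩
    have hx₀e : x₀ = (2 * (k : ℝ) + 1) * T := by
      have : ((n : ℝ)) = (k : ℝ) + 1 := by exact_mod_cast congrArg (fun m : ℤ => (m : ℝ)) hk
      nlinarith [he, this]
    rw [hx₀e]
    exact mainB k
  · -- interior point
    set k : ℕ := n.toNat with hkdef
    have hkn : (k : ℝ) = (n : ℝ) := by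
      rw [hkdef]; exact_mod_cast congrArg (fun m : ℤ => (m : ℝ)) (Int.toNat_of_nonneg hn0)
    refine mainA k x₀ ?_ ?_
    · rw [hkn]; nlinarith
    · rw [hkn]; nlinarith

/-- The glued initial velocity `v`, built from a C¹ function `u` on `[-T,T]` (satisfying the
three matching conditions) and translates of `f̃'`, is C¹ on all of ℝ. -/
theorem glued_velocity_C1 (T : ℝ) (hT : 0 < T) (ft : ℝ → ℝ) (hft : ContDiff ℝ 2 ft)
    (u : ℝ → ℝ) (hu : ContDiffOn ℝ 1 u (Set.Icc (-T) T))
    (hu1 : (∫ τ in (-T)..T, u τ) = 2 * ft 0)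
    (hu2 : u T - u (-T) = 2 * deriv ft 0)
    (hu3 : derivWithin u (Set.Iic T) T - derivWithin u (Set.Ici (-T)) (-T)
            = 2 * deriv (deriv ft) 0)
    (N : ℝ → ℕ)
    (hN1 : ∀ x : ℝ, 0 ≤ x → x - 2 * (N x : ℝ) * T ∈ Set.Icc (-T) T)
    (hN2 : ∀ x : ℝ, x < 0 → x + 2 * (N x : ℝ) * T ∈ Set.Icc (-T) T)
    (v : ℝ → ℝ)
    (hv1 : ∀ x : ℝ, 0 ≤ x →
      v x = u (x - 2 * (N x : ℝ) * T)
            + 2 * ∑ i ∈ Finset.range (N x), deriv ft (x - (2 * (i : ℝ) + 1) * T))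
    (hv2 : ∀ x : ℝ, x < 0 →
      v x = u (x + 2 * (N x : ℝ) * T)
            - 2 * ∑ i ∈ Finset.range (N x), deriv ft (x + (2 * (i : ℝ) + 1) * T)) :
    ContDiff ℝ 1 v := by
  have hTT : -T < T := by linarith
  have hUD : UniqueDiffOn ℝ (Icc (-T) T) := uniqueDiffOn_Icc hTT
  have hud : ∀ y ∈ Icc (-T) T, HasDerivWithinAt u (derivWithin u (Icc (-T) T) y) (Icc (-T) T) y :=
    fun y hy => ((hu.differentiableOn one_ne_zero) y hy).hasDerivWithinAt
  -- convert the one-sided derivatives to `Icc`-derivatives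
  have e1 : derivWithin u (Iic T) T = derivWithin u (Icc (-T) T) T := by
    apply derivWithin_congr_set
    rw [Filter.eventuallyEq_set]
    filter_upwards [Ioi_mem_nhds hTT] with y hy
    simp only [mem_Iic, mem_Icc]
    exact ⟨fun h => ⟨le_of_lt hy, h⟩, fun h => h.2⟩
  have e2 : derivWithin u (Ici (-T)) (-T) = derivWithin u (Icc (-T) T) (-T) := by
    apply derivWithin_congr_set
    rw [Filter.eventuallyEq_set]
    filter_upwards [Iio_mem_nhds hTT] with y hy
    simp only [mem_Ici, mem_Icc]
    exact ⟨fun h => ⟨h, le_of_lt hy⟩, fun h => h.1⟩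
  rw [e1, e2] at hu3
  rw [contDiff_iff_contDiffAt]
  intro x
  rcases le_or_gt 0 x with hx | hx
  · exact aux_pos T hT ft hft u hu hu2 hu3 N hN1 hN2 v hv1 hv2 x hx
  · -- reflect
    set ft2 : ℝ → ℝ := fun y => ft (-y) with hft2def
    set u2 : ℝ → ℝ := fun y => u (-y) with hu2def
    set v2 : ℝ → ℝ := fun y => v (-y) with hv2def
    set N2 : ℝ → ℕ := fun y => N (-y) with hN2def
    have hd1 : deriv ft2 = fun y => -(deriv ft (-y)) := funext fun y => deriv_comp_neg ft y
    have hft2C : ContDiff ℝ 2 ft2 := hft.comp contDiff_neg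
    have hmaps : MapsTo (fun y : ℝ => -y) (Icc (-T) T) (Icc (-T) T) := by
      intro y hy
      simp only [mem_Icc] at hy ⊢
      constructor <;> linarith [hy.1, hy.2]
    have hu2cd : ContDiffOn ℝ 1 u2 (Icc (-T) T) :=
      hu.comp contDiff_neg.contDiffOn hmaps
    have hu2' : u2 T - u2 (-T) = 2 * deriv ft2 0 := by
      rw [hd1]
      simp only [hu2def, neg_neg, neg_zero]
      linarith
    -- second derivative of ft2 at 0
    have hgd : Differentiable ℝ (deriv ft) := by
      have hgC : ContDiff ℝ 1 (deriv ft) := by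
        rw [show (2 : WithTop ℕ∞) = 1 + 1 by norm_num] at hft
        exact (contDiff_succ_iff_deriv.mp hft).2.2
      exact hgC.differentiable one_ne_zero
    have hd2 : deriv (deriv ft2) 0 = deriv (deriv ft) 0 := by
      rw [hd1]
      rw [show (fun y => -(deriv ft (-y))) = fun y => -((fun z => deriv ft (-z)) y) from rfl]
      rw [deriv.fun_neg]
      rw [deriv_comp_neg]
      simp
    -- derivWithin of u2 at the endpoints
    have hdu2T : HasDerivWithinAt u2 (-(derivWithin u (Icc (-T) T) (-T))) (Icc (-T) T) T := by
      have h1 := hud (-T) (left_mem_Icc.mpr hTT.le)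
      have h2 : HasDerivWithinAt (fun y : ℝ => -y) (-1) (Icc (-T) T) T :=
        (hasDerivWithinAt_id T _).neg
      have := HasDerivWithinAt.comp (h₂ := u) (h := fun y : ℝ => -y) T h1 h2 hmaps
      rw [show -(derivWithin u (Icc (-T) T) (-T)) = derivWithin u (Icc (-T) T) (-T) * -1 by ring]
      exact this
    have hdu2mT : HasDerivWithinAt u2 (-(derivWithin u (Icc (-T) T) T)) (Icc (-T) T) (-T) := by
      have h1 : HasDerivWithinAt u (derivWithin u (Icc (-T) T) T) (Icc (-T) T) (-(-T)) := by
        rw [neg_neg]; exact hud T (right_mem_Icc.mpr hTT.le)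
      have h2 : HasDerivWithinAt (fun y : ℝ => -y) (-1) (Icc (-T) T) (-T) :=
        (hasDerivWithinAt_id (-T) _).neg
      have := HasDerivWithinAt.comp (h₂ := u) (h := fun y : ℝ => -y) (-T) h1 h2 hmaps
      rw [show -(derivWithin u (Icc (-T) T) T) = derivWithin u (Icc (-T) T) T * -1 by ring]
      exact this
    have hu3' : derivWithin u2 (Icc (-T) T) T - derivWithin u2 (Icc (-T) T) (-T)
        = 2 * deriv (deriv ft2) 0 := by
      rw [hdu2T.derivWithin (hUD T (right_mem_Icc.mpr hTT.le)),
        hdu2mT.derivWithin (hUD (-T) (left_mem_Icc.mpr hTT.le)), hd2]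
      linarith
    -- N conditions
    have hN00 : N 0 = 0 := by
      obtain ⟨hl, hr⟩ := hN1 0 le_rfl
      by_contra h
      have h1' : (1 : ℝ) ≤ (N 0 : ℝ) := by exact_mod_cast Nat.one_le_iff_ne_zero.mpr h
      nlinarith
    have hN20 : N2 (0 : ℝ) = 0 := by
      simp only [hN2def, neg_zero, hN00]
    have hN1' : ∀ y : ℝ, 0 ≤ y → y - 2 * (N2 y : ℝ) * T ∈ Icc (-T) T := by
      intro y hy
      rcases eq_or_lt_of_le hy with h0 | h0
      · rw [← h0, hN20]
        refine mem_Icc.mpr ⟨by norm_num; linarith, by norm_num; linarith⟩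
      · have := hN2 (-y) (by linarith)
        simp only [mem_Icc] at this ⊢
        simp only [hN2def]
        constructor <;> linarith [this.1, this.2]
    have hN2' : ∀ y : ℝ, y < 0 → y + 2 * (N2 y : ℝ) * T ∈ Icc (-T) T := by
      intro y hy
      have := hN1 (-y) (by linarith)
      simp only [mem_Icc] at this ⊢
      simp only [hN2def]
      constructor <;> linarith [this.1, this.2]
    -- v conditions
    have hv1' : ∀ y : ℝ, 0 ≤ y →
        v2 y = u2 (y - 2 * (N2 y : ℝ) * T)
          + 2 * ∑ i ∈ Finset.range (N2 y), deriv ft2 (y - (2 * (i : ℝ) + 1) * T) := by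
      intro y hy
      rcases eq_or_lt_of_le hy with h0 | h0
      · rw [← h0, hN20]
        simp only [hv2def, hu2def, neg_zero, Finset.range_zero, Finset.sum_empty, mul_zero,
          add_zero, Nat.cast_zero]
        rw [hv1 0 le_rfl, hN00]
        norm_num
      · have hyneg : -y < 0 := by linarith
        have hS : ∑ i ∈ Finset.range (N (-y)), deriv ft2 (y - (2 * (i : ℝ) + 1) * T)
            = -∑ i ∈ Finset.range (N (-y)), deriv ft (-y + (2 * (i : ℝ) + 1) * T) := by
          simp only [hd1, Finset.sum_neg_distrib]
          congr 1
          refine Finset.sum_congr rfl fun i _ => ?_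
          congr 1
          ring
        have hA : -(y - 2 * (N (-y) : ℝ) * T) = -y + 2 * (N (-y) : ℝ) * T := by ring
        simp only [hv2def, hu2def, hN2def]
        rw [hS, hA, hv2 (-y) hyneg]
        ring
    have hv2' : ∀ y : ℝ, y < 0 →
        v2 y = u2 (y + 2 * (N2 y : ℝ) * T)
          - 2 * ∑ i ∈ Finset.range (N2 y), deriv ft2 (y + (2 * (i : ℝ) + 1) * T) := by
      intro y hy
      have hypos : (0:ℝ) ≤ -y := by linarith
      have hS : ∑ i ∈ Finset.range (N (-y)), deriv ft2 (y + (2 * (i : ℝ) + 1) * T)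
          = -∑ i ∈ Finset.range (N (-y)), deriv ft (-y - (2 * (i : ℝ) + 1) * T) := by
        simp only [hd1, Finset.sum_neg_distrib]
        congr 1
        refine Finset.sum_congr rfl fun i _ => ?_
        congr 1
        ring
      have hA : -(y + 2 * (N (-y) : ℝ) * T) = -y - 2 * (N (-y) : ℝ) * T := by ring
      simp only [hv2def, hu2def, hN2def]
      rw [hS, hA, hv1 (-y) hypos]
      ring
    have H := aux_pos T hT ft2 hft2C u2 hu2cd hu2' hu3' N2 hN1' hN2' v2 hv1' hv2'
      (-x) (by linarith)
    have H2 : ContDiffAt ℝ 1 (v2 ∘ fun y : ℝ => -y) x :=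
      ContDiffAt.comp x H (contDiff_neg.contDiffAt)
    have hvv : (v2 ∘ fun y : ℝ => -y) = v := by
      funext z
      simp [hv2def, Function.comp]
    rwa [hvv] at H2
end

section
/- Let T > 0 and f̃ : ℝ → ℝ be C^2 with f̃(0) known. With v defined as in the gluing construction (v(x) = u(x−2NT) + 2∑_{i=1}^{N} f̃'(x−(2i−1)T) for x ≥ 0 and symmetrically for x < 0, where u satisfies ∫_{−T}^{T} u = 2f̃(0), u(T)−u(−T)=2f̃'(0), u'₋(T)−u'₊(−T)=2f̃''(0)), the function ỹ(t,x) = (1/2)∫_{x−t}^{x+t} v(τ)dτ satisfies ỹ(T,x) = f̃(x) for all x ∈ ℝ. -/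
open Real Set Filter Topology MeasureTheory

private lemma velA {T : ℝ} (hT : 0 < T) {ft u : ℝ → ℝ}
    (hu2 : u T - u (-T) = 2 * deriv ft 0)
    {N : ℝ → ℕ} (hN1 : ∀ x : ℝ, 0 ≤ x → x - 2 * (N x : ℝ) * T ∈ Set.Icc (-T) T)
    {v : ℝ → ℝ}
    (hv1 : ∀ x : ℝ, 0 ≤ x →
      v x = u (x - 2 * (N x : ℝ) * T)
            + 2 * ∑ i ∈ Finset.range (N x), deriv ft (x - (2 * (i : ℝ) + 1) * T)) :
    ∀ x : ℝ, 0 ≤ x → ∀ k : ℕ, x - 2 * (k : ℝ) * T ∈ Set.Icc (-T) T →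
      v x = u (x - 2 * (k : ℝ) * T)
            + 2 * ∑ i ∈ Finset.range k, deriv ft (x - (2 * (i : ℝ) + 1) * T) := by
  intro x hx k hk
  obtain ⟨hk1, hk2⟩ := hk
  obtain ⟨hn1, hn2⟩ := hN1 x hx
  set n := N x with hn
  have hcase : n = k ∨ n = k + 1 ∨ k = n + 1 := by
    by_contra h
    push_neg at h
    obtain ⟨h1, h2, h3⟩ := h
    rcases lt_or_gt_of_ne h1 with h | h
    · have : (n : ℝ) + 2 ≤ (k : ℝ) := by exact_mod_cast by omega
      nlinarith
    · have : (k : ℝ) + 2 ≤ (n : ℝ) := by exact_mod_cast by omega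
      nlinarith
  rcases hcase with h | h | h
  · rw [hv1 x hx, ← hn, h]
  · -- n = k+1 : x - 2kT = T, x - 2nT = -T
    have hck : (n : ℝ) = (k : ℝ) + 1 := by exact_mod_cast h
    have hkT : x - 2 * (k : ℝ) * T = T := by nlinarith
    have hnT : x - 2 * (n : ℝ) * T = -T := by nlinarith
    have h0 : x - (2 * (k : ℝ) + 1) * T = 0 := by nlinarith
    rw [hv1 x hx, ← hn, hnT, hkT, h, Finset.sum_range_succ, h0]
    linarith [hu2]
  · -- k = n+1 : x - 2kT = -T, x - 2nT = T
    have hck : (k : ℝ) = (n : ℝ) + 1 := by exact_mod_cast h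
    have hkT : x - 2 * (k : ℝ) * T = -T := by nlinarith
    have hnT : x - 2 * (n : ℝ) * T = T := by nlinarith
    have h0 : x - (2 * (n : ℝ) + 1) * T = 0 := by nlinarith
    rw [hv1 x hx, ← hn, hnT, hkT, h, Finset.sum_range_succ, h0]
    linarith [hu2]

private lemma velB {T : ℝ} (hT : 0 < T) {ft u : ℝ → ℝ}
    (hu2 : u T - u (-T) = 2 * deriv ft 0)
    {N : ℝ → ℕ} (hN2 : ∀ x : ℝ, x < 0 → x + 2 * (N x : ℝ) * T ∈ Set.Icc (-T) T)
    {v : ℝ → ℝ}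
    (hv2 : ∀ x : ℝ, x < 0 →
      v x = u (x + 2 * (N x : ℝ) * T)
            - 2 * ∑ i ∈ Finset.range (N x), deriv ft (x + (2 * (i : ℝ) + 1) * T)) :
    ∀ x : ℝ, x < 0 → ∀ k : ℕ, x + 2 * (k : ℝ) * T ∈ Set.Icc (-T) T →
      v x = u (x + 2 * (k : ℝ) * T)
            - 2 * ∑ i ∈ Finset.range k, deriv ft (x + (2 * (i : ℝ) + 1) * T) := by
  intro x hx k hk
  obtain ⟨hk1, hk2⟩ := hk
  obtain ⟨hn1, hn2⟩ := hN2 x hx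
  set n := N x with hn
  have hcase : n = k ∨ n = k + 1 ∨ k = n + 1 := by
    by_contra h
    push_neg at h
    obtain ⟨h1, h2, h3⟩ := h
    rcases lt_or_gt_of_ne h1 with h | h
    · have : (n : ℝ) + 2 ≤ (k : ℝ) := by exact_mod_cast by omega
      nlinarith
    · have : (k : ℝ) + 2 ≤ (n : ℝ) := by exact_mod_cast by omega
      nlinarith
  rcases hcase with h | h | h
  · rw [hv2 x hx, ← hn, h]
  · -- n = k+1 : x + 2kT = -T, x + 2nT = T
    have hck : (n : ℝ) = (k : ℝ) + 1 := by exact_mod_cast h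
    have hkT : x + 2 * (k : ℝ) * T = -T := by nlinarith
    have hnT : x + 2 * (n : ℝ) * T = T := by nlinarith
    have h0 : x + (2 * (k : ℝ) + 1) * T = 0 := by nlinarith
    rw [hv2 x hx, ← hn, hnT, hkT, h, Finset.sum_range_succ, h0]
    linarith [hu2]
  · -- k = n+1 : x + 2kT = T, x + 2nT = -T
    have hck : (k : ℝ) = (n : ℝ) + 1 := by exact_mod_cast h
    have hkT : x + 2 * (k : ℝ) * T = T := by nlinarith
    have hnT : x + 2 * (n : ℝ) * T = -T := by nlinarith
    have h0 : x + (2 * (n : ℝ) + 1) * T = 0 := by nlinarith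
    rw [hv2 x hx, ← hn, hnT, hkT, h, Finset.sum_range_succ, h0]
    linarith [hu2]

private lemma velDiff {T : ℝ} (hT : 0 < T) {ft u : ℝ → ℝ}
    (hu2 : u T - u (-T) = 2 * deriv ft 0)
    {N : ℝ → ℕ}
    (hN1 : ∀ x : ℝ, 0 ≤ x → x - 2 * (N x : ℝ) * T ∈ Set.Icc (-T) T)
    (hN2 : ∀ x : ℝ, x < 0 → x + 2 * (N x : ℝ) * T ∈ Set.Icc (-T) T)
    {v : ℝ → ℝ}
    (hv1 : ∀ x : ℝ, 0 ≤ x →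
      v x = u (x - 2 * (N x : ℝ) * T)
            + 2 * ∑ i ∈ Finset.range (N x), deriv ft (x - (2 * (i : ℝ) + 1) * T))
    (hv2 : ∀ x : ℝ, x < 0 →
      v x = u (x + 2 * (N x : ℝ) * T)
            - 2 * ∑ i ∈ Finset.range (N x), deriv ft (x + (2 * (i : ℝ) + 1) * T)) :
    ∀ x : ℝ, v (x + T) - v (x - T) = 2 * deriv ft x := by
  have hA := velA hT hu2 hN1 hv1
  have hB := velB hT hu2 hN2 hv2
  intro x
  rcases lt_or_ge x (-T) with hx | hx
  · -- x < -T
    set k := N (x + T) with hk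
    obtain ⟨hk1, hk2⟩ := hN2 (x + T) (by linarith)
    have h1 := hB (x + T) (by linarith) k ⟨hk1, hk2⟩
    have h2 := hB (x - T) (by linarith) (k + 1) (by
      constructor <;> [push_cast; push_cast] <;> linarith)
    have hu_eq : u ((x - T) + 2 * ((k + 1 : ℕ) : ℝ) * T) = u ((x + T) + 2 * (k : ℝ) * T) := by
      congr 1; push_cast; ring
    have hsum : ∑ i ∈ Finset.range (k + 1), deriv ft ((x - T) + (2 * (i : ℝ) + 1) * T)
        = (∑ i ∈ Finset.range k, deriv ft ((x + T) + (2 * (i : ℝ) + 1) * T)) + deriv ft x := by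
      rw [Finset.sum_range_succ']
      congr 1
      · refine Finset.sum_congr rfl fun i _ => ?_
        congr 1; push_cast; ring
      · congr 1; push_cast; ring
    rw [h1, h2, hu_eq, hsum]; ring
  rcases lt_or_ge x 0 with hx0 | hx0
  · -- -T ≤ x < 0
    have h1 := hA (x + T) (by linarith) 0 (by
      constructor <;> [push_cast; push_cast] <;> linarith)
    have h2 := hB (x - T) (by linarith) 1 (by
      constructor <;> [push_cast; push_cast] <;> linarith)
    rw [Finset.sum_range_one] at h2
    simp only [Finset.range_zero, Finset.sum_empty, Nat.cast_zero, Nat.cast_one] at h1 h2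
    have e1 : x + T - 2 * 0 * T = x + T := by ring
    have e2 : x - T + 2 * 1 * T = x + T := by ring
    have e3 : x - T + (2 * (0:ℝ) + 1) * T = x := by ring
    rw [e1] at h1
    rw [e2, e3] at h2
    rw [h1, h2]; ring
  rcases le_or_gt x T with hxT | hxT
  · -- 0 ≤ x ≤ T
    have h2 : v (x - T) = u (x - T) := by
      rcases lt_or_ge (x - T) 0 with h | h
      · have := hB (x - T) h 0 (by
          constructor <;> [push_cast; push_cast] <;> linarith)
        simpa using this
      · have := hA (x - T) h 0 (by
          constructor <;> [push_cast; push_cast] <;> linarith)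
        simpa using this
    have h1 := hA (x + T) (by linarith) 1 (by
      constructor <;> [push_cast; push_cast] <;> linarith)
    rw [Finset.sum_range_one] at h1
    simp only [Nat.cast_zero, Nat.cast_one] at h1
    have e2 : x + T - 2 * 1 * T = x - T := by ring
    have e3 : x + T - (2 * (0:ℝ) + 1) * T = x := by ring
    rw [e2, e3] at h1
    rw [h1, h2]; ring
  · -- T < x
    set k := N (x - T) with hk
    obtain ⟨hk1, hk2⟩ := hN1 (x - T) (by linarith)
    have h2 := hA (x - T) (by linarith) k ⟨hk1, hk2⟩
    have h1 := hA (x + T) (by linarith) (k + 1) (by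
      constructor <;> [push_cast; push_cast] <;> linarith)
    have hu_eq : u ((x + T) - 2 * ((k + 1 : ℕ) : ℝ) * T) = u ((x - T) - 2 * (k : ℝ) * T) := by
      congr 1; push_cast; ring
    have hsum : ∑ i ∈ Finset.range (k + 1), deriv ft ((x + T) - (2 * (i : ℝ) + 1) * T)
        = (∑ i ∈ Finset.range k, deriv ft ((x - T) - (2 * (i : ℝ) + 1) * T)) + deriv ft x := by
      rw [Finset.sum_range_succ']
      congr 1
      · refine Finset.sum_congr rfl fun i _ => ?_
        congr 1; push_cast; ring
      · congr 1; push_cast; ring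
    rw [h1, h2, hu_eq, hsum]; ring

private lemma velCont {T : ℝ} (hT : 0 < T) {ft u : ℝ → ℝ}
    (hft : ContDiff ℝ 2 ft) (hu : ContDiffOn ℝ 1 u (Set.Icc (-T) T))
    (hu2 : u T - u (-T) = 2 * deriv ft 0)
    {N : ℝ → ℕ}
    (hN1 : ∀ x : ℝ, 0 ≤ x → x - 2 * (N x : ℝ) * T ∈ Set.Icc (-T) T)
    (hN2 : ∀ x : ℝ, x < 0 → x + 2 * (N x : ℝ) * T ∈ Set.Icc (-T) T)
    {v : ℝ → ℝ}
    (hv1 : ∀ x : ℝ, 0 ≤ x →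
      v x = u (x - 2 * (N x : ℝ) * T)
            + 2 * ∑ i ∈ Finset.range (N x), deriv ft (x - (2 * (i : ℝ) + 1) * T))
    (hv2 : ∀ x : ℝ, x < 0 →
      v x = u (x + 2 * (N x : ℝ) * T)
            - 2 * ∑ i ∈ Finset.range (N x), deriv ft (x + (2 * (i : ℝ) + 1) * T)) :
    Continuous v := by
  have hA := velA hT hu2 hN1 hv1
  have hB := velB hT hu2 hN2 hv2
  have huc : ContinuousOn u (Icc (-T) T) := hu.continuousOn
  have hdc : Continuous (deriv ft) := hft.continuous_deriv one_le_two
  have hsumP : ∀ k : ℕ, Continuous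
      (fun x : ℝ => 2 * ∑ i ∈ Finset.range k, deriv ft (x - (2 * (i : ℝ) + 1) * T)) := by
    intro k
    refine continuous_const.mul (continuous_finset_sum _ fun i _ => ?_)
    exact hdc.comp (continuous_id.sub continuous_const)
  have hsumN : ∀ k : ℕ, Continuous
      (fun x : ℝ => 2 * ∑ i ∈ Finset.range k, deriv ft (x + (2 * (i : ℝ) + 1) * T)) := by
    intro k
    refine continuous_const.mul (continuous_finset_sum _ fun i _ => ?_)
    exact hdc.comp (continuous_id.add continuous_const)
  have huT : ContinuousWithinAt u (Iic T) T := by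
    have h0 := huc.continuousWithinAt (show T ∈ Icc (-T) T from ⟨by linarith, le_rfl⟩)
    rwa [ContinuousWithinAt, nhdsWithin_Icc_eq_nhdsLE (show -T < T by linarith)] at h0
  have humT : ContinuousWithinAt u (Ici (-T)) (-T) := by
    have h0 := huc.continuousWithinAt (show -T ∈ Icc (-T) T from ⟨le_rfl, by linarith⟩)
    rwa [ContinuousWithinAt, nhdsWithin_Icc_eq_nhdsGE (show -T < T by linarith)] at h0
  -- interior positive cells
  have hIooP : ∀ k : ℕ, 1 ≤ k → ∀ p : ℝ, -T < p - 2 * (k : ℝ) * T →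
      p - 2 * (k : ℝ) * T < T → ContinuousAt v p := by
    intro k hk p h1 h2
    have hk1 : (1 : ℝ) ≤ (k : ℝ) := by exact_mod_cast hk
    have hu_at : ContinuousAt u (p - 2 * (k : ℝ) * T) := huc.continuousAt (Icc_mem_nhds h1 h2)
    have hgc : ContinuousAt (fun x : ℝ => u (x - 2 * (k : ℝ) * T)
        + 2 * ∑ i ∈ Finset.range k, deriv ft (x - (2 * (i : ℝ) + 1) * T)) p := by
      exact (ContinuousAt.comp (f := fun x : ℝ => x - 2 * (k : ℝ) * T) hu_at
        ((continuous_id.sub continuous_const).continuousAt)).add ((hsumP k).continuousAt)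
    refine hgc.congr (Filter.EventuallyEq.symm ?_)
    have hmem : Ioo (2 * (k : ℝ) * T - T) (2 * (k : ℝ) * T + T) ∈ 𝓝 p :=
      Ioo_mem_nhds (by linarith) (by linarith)
    filter_upwards [hmem] with x hx
    have hx0 : (0 : ℝ) ≤ x := by nlinarith [hx.1]
    exact hA x hx0 k ⟨by linarith [hx.1], by linarith [hx.2]⟩
  -- interior negative cells
  have hIooN : ∀ k : ℕ, 1 ≤ k → ∀ p : ℝ, -T < p + 2 * (k : ℝ) * T →
      p + 2 * (k : ℝ) * T < T → ContinuousAt v p := by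
    intro k hk p h1 h2
    have hk1 : (1 : ℝ) ≤ (k : ℝ) := by exact_mod_cast hk
    have hu_at : ContinuousAt u (p + 2 * (k : ℝ) * T) := huc.continuousAt (Icc_mem_nhds h1 h2)
    have hgc : ContinuousAt (fun x : ℝ => u (x + 2 * (k : ℝ) * T)
        - 2 * ∑ i ∈ Finset.range k, deriv ft (x + (2 * (i : ℝ) + 1) * T)) p := by
      exact (ContinuousAt.comp (f := fun x : ℝ => x + 2 * (k : ℝ) * T) hu_at
        ((continuous_id.add continuous_const).continuousAt)).sub ((hsumN k).continuousAt)
    refine hgc.congr (Filter.EventuallyEq.symm ?_)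
    have hmem : Ioo (-(2 * (k : ℝ) * T) - T) (-(2 * (k : ℝ) * T) + T) ∈ 𝓝 p :=
      Ioo_mem_nhds (by linarith) (by linarith)
    filter_upwards [hmem] with x hx
    have hx0 : x < 0 := by nlinarith [hx.2]
    exact hB x hx0 k ⟨by linarith [hx.1], by linarith [hx.2]⟩
  -- positive boundaries
  have hBdP : ∀ k : ℕ, ContinuousAt v ((2 * (k : ℝ) + 1) * T) := by
    intro k
    set p := (2 * (k : ℝ) + 1) * T with hp
    have hk0 : (0 : ℝ) ≤ (k : ℝ) := Nat.cast_nonneg k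
    have hp0 : 0 < p := by nlinarith
    have hpT : p - 2 * (k : ℝ) * T = T := by rw [hp]; ring
    have hpmT : p - 2 * ((k + 1 : ℕ) : ℝ) * T = -T := by push_cast; rw [hp]; ring
    -- left
    have hvL : ContinuousWithinAt v (Iic p) p := by
      have hgL : ContinuousWithinAt (fun x : ℝ => u (x - 2 * (k : ℝ) * T)
          + 2 * ∑ i ∈ Finset.range k, deriv ft (x - (2 * (i : ℝ) + 1) * T)) (Iic p) p := by
        refine ContinuousWithinAt.add ?_ ((hsumP k).continuousWithinAt)
        have hin : ContinuousWithinAt (fun x : ℝ => x - 2 * (k : ℝ) * T) (Iic p) p :=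
          (continuous_id.sub continuous_const).continuousWithinAt
        have huT' : ContinuousWithinAt u (Iic T) (p - 2 * (k : ℝ) * T) := by rw [hpT]; exact huT
        exact ContinuousWithinAt.comp (f := fun x : ℝ => x - 2 * (k : ℝ) * T) huT' hin
          (fun x hx => by simp only [mem_Iic] at hx ⊢; linarith)
      have hvIoc : ContinuousWithinAt v (Ioc (p - T) p) p := by
        refine (hgL.mono Ioc_subset_Iic_self).congr ?_ ?_
        · intro x hx
          obtain ⟨hx1, hx2⟩ := hx
          have hx0 : (0 : ℝ) ≤ x := by nlinarith
          exact hA x hx0 k ⟨by nlinarith, by nlinarith⟩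
        · exact hA p (le_of_lt hp0) k ⟨by rw [hpT]; linarith, by rw [hpT]⟩
      refine hvIoc.mono_of_mem_nhdsWithin ?_
      rw [← nhdsWithin_Ioc_eq_nhdsLE (show p - T < p by linarith)]
      exact self_mem_nhdsWithin
    -- right
    have hvR : ContinuousWithinAt v (Ici p) p := by
      have hgR : ContinuousWithinAt (fun x : ℝ => u (x - 2 * ((k + 1 : ℕ) : ℝ) * T)
          + 2 * ∑ i ∈ Finset.range (k + 1), deriv ft (x - (2 * (i : ℝ) + 1) * T)) (Ici p) p := by
        refine ContinuousWithinAt.add ?_ ((hsumP (k + 1)).continuousWithinAt)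
        have hin : ContinuousWithinAt (fun x : ℝ => x - 2 * ((k + 1 : ℕ) : ℝ) * T) (Ici p) p :=
          (continuous_id.sub continuous_const).continuousWithinAt
        have humT' : ContinuousWithinAt u (Ici (-T)) (p - 2 * ((k + 1 : ℕ) : ℝ) * T) := by
          rw [hpmT]; exact humT
        exact ContinuousWithinAt.comp (f := fun x : ℝ => x - 2 * ((k + 1 : ℕ) : ℝ) * T) humT' hin
          (fun x hx => by simp only [mem_Ici] at hx ⊢; linarith [hpmT])
      have hvIco : ContinuousWithinAt v (Ico p (p + T)) p := by
        refine (hgR.mono Ico_subset_Ici_self).congr ?_ ?_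
        · intro x hx
          obtain ⟨hx1, hx2⟩ := hx
          have hx0 : (0 : ℝ) ≤ x := by nlinarith
          refine hA x hx0 (k + 1) ⟨?_, ?_⟩ <;> push_cast <;> push_cast at hpmT <;> nlinarith
        · exact hA p (le_of_lt hp0) (k + 1) ⟨by rw [hpmT], by rw [hpmT]; linarith⟩
      refine hvIco.mono_of_mem_nhdsWithin ?_
      rw [← nhdsWithin_Ico_eq_nhdsGE (show p < p + T by linarith)]
      exact self_mem_nhdsWithin
    exact continuousAt_iff_continuous_left_right.2 ⟨hvL, hvR⟩
  -- negative boundaries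
  have hBdN : ∀ k : ℕ, ContinuousAt v (-((2 * (k : ℝ) + 1) * T)) := by
    intro k
    set p := -((2 * (k : ℝ) + 1) * T) with hp
    have hk0 : (0 : ℝ) ≤ (k : ℝ) := Nat.cast_nonneg k
    have hp0 : p < 0 := by rw [hp]; nlinarith
    have hpT : p + 2 * (k : ℝ) * T = -T := by rw [hp]; ring
    have hpmT : p + 2 * ((k + 1 : ℕ) : ℝ) * T = T := by push_cast; rw [hp]; ring
    -- right (toward 0)
    have hvR : ContinuousWithinAt v (Ici p) p := by
      have hgR : ContinuousWithinAt (fun x : ℝ => u (x + 2 * (k : ℝ) * T)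
          - 2 * ∑ i ∈ Finset.range k, deriv ft (x + (2 * (i : ℝ) + 1) * T)) (Ici p) p := by
        refine ContinuousWithinAt.sub ?_ ((hsumN k).continuousWithinAt)
        have hin : ContinuousWithinAt (fun x : ℝ => x + 2 * (k : ℝ) * T) (Ici p) p :=
          (continuous_id.add continuous_const).continuousWithinAt
        have humT' : ContinuousWithinAt u (Ici (-T)) (p + 2 * (k : ℝ) * T) := by rw [hpT]; exact humT
        exact ContinuousWithinAt.comp (f := fun x : ℝ => x + 2 * (k : ℝ) * T) humT' hin
          (fun x hx => by simp only [mem_Ici] at hx ⊢; linarith)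
      have hvIco : ContinuousWithinAt v (Ico p (p + T)) p := by
        refine (hgR.mono Ico_subset_Ici_self).congr ?_ ?_
        · intro x hx
          obtain ⟨hx1, hx2⟩ := hx
          have hx0 : x < 0 := by nlinarith
          exact hB x hx0 k ⟨by nlinarith, by nlinarith⟩
        · exact hB p hp0 k ⟨by rw [hpT], by rw [hpT]; linarith⟩
      refine hvIco.mono_of_mem_nhdsWithin ?_
      rw [← nhdsWithin_Ico_eq_nhdsGE (show p < p + T by linarith)]
      exact self_mem_nhdsWithin
    -- left
    have hvL : ContinuousWithinAt v (Iic p) p := by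
      have hgL : ContinuousWithinAt (fun x : ℝ => u (x + 2 * ((k + 1 : ℕ) : ℝ) * T)
          - 2 * ∑ i ∈ Finset.range (k + 1), deriv ft (x + (2 * (i : ℝ) + 1) * T)) (Iic p) p := by
        refine ContinuousWithinAt.sub ?_ ((hsumN (k + 1)).continuousWithinAt)
        have hin : ContinuousWithinAt (fun x : ℝ => x + 2 * ((k + 1 : ℕ) : ℝ) * T) (Iic p) p :=
          (continuous_id.add continuous_const).continuousWithinAt
        have huT' : ContinuousWithinAt u (Iic T) (p + 2 * ((k + 1 : ℕ) : ℝ) * T) := by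
          rw [hpmT]; exact huT
        exact ContinuousWithinAt.comp (f := fun x : ℝ => x + 2 * ((k + 1 : ℕ) : ℝ) * T) huT' hin
          (fun x hx => by simp only [mem_Iic] at hx ⊢; linarith [hpmT])
      have hvIoc : ContinuousWithinAt v (Ioc (p - T) p) p := by
        refine (hgL.mono Ioc_subset_Iic_self).congr ?_ ?_
        · intro x hx
          obtain ⟨hx1, hx2⟩ := hx
          have hx0 : x < 0 := by nlinarith
          refine hB x hx0 (k + 1) ⟨?_, ?_⟩ <;> push_cast <;> push_cast at hpmT <;> nlinarith
        · exact hB p hp0 (k + 1) ⟨by rw [hpmT]; linarith, by rw [hpmT]⟩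
      refine hvIoc.mono_of_mem_nhdsWithin ?_
      rw [← nhdsWithin_Ioc_eq_nhdsLE (show p - T < p by linarith)]
      exact self_mem_nhdsWithin
    exact continuousAt_iff_continuous_left_right.2 ⟨hvL, hvR⟩
  -- assembly
  rw [continuous_iff_continuousAt]
  intro p
  rcases lt_or_ge p (-T) with hpc | hpc
  · obtain ⟨h1, h2⟩ := hN2 p (by linarith)
    have hk : 1 ≤ N p := by
      by_contra hcon
      push_neg at hcon
      interval_cases h : N p
      · simp [h] at h1 h2; linarith
    rcases eq_or_lt_of_le h1 with he | h1'
    · have : p = -((2 * ((N p : ℕ) : ℝ) + 1) * T) := by linarith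
      rw [this]; exact hBdN (N p)
    rcases eq_or_lt_of_le h2 with he | h2'
    · have hc : ((N p - 1 : ℕ) : ℝ) = (N p : ℝ) - 1 := by
        have := Nat.cast_sub (R := ℝ) hk; simpa using this
      have : p = -((2 * ((N p - 1 : ℕ) : ℝ) + 1) * T) := by rw [hc]; linarith
      rw [this]; exact hBdN (N p - 1)
    · exact hIooN (N p) hk p h1' h2'
  rcases le_or_gt p T with hpc2 | hpc2
  · rcases eq_or_lt_of_le hpc with he | hpc'
    · have : p = -((2 * ((0 : ℕ) : ℝ) + 1) * T) := by push_cast; linarith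
      rw [this]; exact hBdN 0
    rcases eq_or_lt_of_le hpc2 with he | hpc2'
    · have : p = (2 * ((0 : ℕ) : ℝ) + 1) * T := by push_cast; linarith
      rw [this]; exact hBdP 0
    · -- interior of the center cell
      have hu_at : ContinuousAt u p := huc.continuousAt (Icc_mem_nhds hpc' hpc2')
      refine hu_at.congr (Filter.EventuallyEq.symm ?_)
      filter_upwards [Ioo_mem_nhds hpc' hpc2'] with x hx
      rcases le_or_gt 0 x with h | h
      · have := hA x h 0 (by simpa using ⟨le_of_lt hx.1, le_of_lt hx.2⟩)
        simpa using this
      · have := hB x h 0 (by simpa using ⟨le_of_lt hx.1, le_of_lt hx.2⟩)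
        simpa using this
  · obtain ⟨h1, h2⟩ := hN1 p (by linarith)
    have hk : 1 ≤ N p := by
      by_contra hcon
      push_neg at hcon
      interval_cases h : N p
      · simp [h] at h1 h2; linarith
    rcases eq_or_lt_of_le h2 with he | h2'
    · have : p = (2 * ((N p : ℕ) : ℝ) + 1) * T := by linarith
      rw [this]; exact hBdP (N p)
    rcases eq_or_lt_of_le h1 with he | h1'
    · have hc : ((N p - 1 : ℕ) : ℝ) = (N p : ℝ) - 1 := by
        have := Nat.cast_sub (R := ℝ) hk; simpa using this
      have : p = (2 * ((N p - 1 : ℕ) : ℝ) + 1) * T := by rw [hc]; linarith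
      rw [this]; exact hBdP (N p - 1)
    · exact hIooP (N p) hk p (by linarith) h2'

/-- With the glued initial velocity `v`, the d'Alembert solution
`ỹ(t,x) = (1/2)∫_{x-t}^{x+t} v` satisfies the terminal condition `ỹ(T,x) = f̃(x)`. -/
theorem glued_velocity_terminal (T : ℝ) (hT : 0 < T) (ft : ℝ → ℝ) (hft : ContDiff ℝ 2 ft)
    (u : ℝ → ℝ) (hu : ContDiffOn ℝ 1 u (Set.Icc (-T) T))
    (hu1 : (∫ τ in (-T)..T, u τ) = 2 * ft 0)
    (hu2 : u T - u (-T) = 2 * deriv ft 0)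
    (hu3 : derivWithin u (Set.Iic T) T - derivWithin u (Set.Ici (-T)) (-T)
            = 2 * deriv (deriv ft) 0)
    (N : ℝ → ℕ)
    (hN1 : ∀ x : ℝ, 0 ≤ x → x - 2 * (N x : ℝ) * T ∈ Set.Icc (-T) T)
    (hN2 : ∀ x : ℝ, x < 0 → x + 2 * (N x : ℝ) * T ∈ Set.Icc (-T) T)
    (v : ℝ → ℝ)
    (hv1 : ∀ x : ℝ, 0 ≤ x →
      v x = u (x - 2 * (N x : ℝ) * T)
            + 2 * ∑ i ∈ Finset.range (N x), deriv ft (x - (2 * (i : ℝ) + 1) * T))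
    (hv2 : ∀ x : ℝ, x < 0 →
      v x = u (x + 2 * (N x : ℝ) * T)
            - 2 * ∑ i ∈ Finset.range (N x), deriv ft (x + (2 * (i : ℝ) + 1) * T)) :
    ∀ x : ℝ, (1 / 2 : ℝ) * ∫ τ in (x - T)..(x + T), v τ = ft x := by
  have hvc : Continuous v := velCont hT hft hu hu2 hN1 hN2 hv1 hv2
  have hdiff := velDiff hT hu2 hN1 hN2 hv1 hv2
  have hftd : Differentiable ℝ ft := hft.differentiable (by norm_num)
  set F : ℝ → ℝ := fun x => (1 / 2 : ℝ) * (∫ τ in (x - T)..(x + T), v τ) - ft x with hF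
  have hsplit : ∀ x : ℝ, (∫ τ in (x - T)..(x + T), v τ)
      = (∫ τ in (0:ℝ)..(x + T), v τ) - ∫ τ in (0:ℝ)..(x - T), v τ := fun x =>
    (intervalIntegral.integral_interval_sub_left (hvc.intervalIntegrable _ _)
      (hvc.intervalIntegrable _ _)).symm
  have hG : ∀ y : ℝ, HasDerivAt (fun y => ∫ t in (0:ℝ)..y, v t) (v y) y := fun y =>
    intervalIntegral.integral_hasDerivAt_right (hvc.intervalIntegrable 0 y)
      (hvc.stronglyMeasurableAtFilter _ _) hvc.continuousAt
  have hFd : ∀ x : ℝ, HasDerivAt F 0 x := by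
    intro x
    have h1 : HasDerivAt (fun x : ℝ => ∫ t in (0:ℝ)..(x + T), v t) (v (x + T)) x := by
      have := (hG (x + T)).comp x ((hasDerivAt_id x).add_const T)
      simpa [Function.comp_def] using this
    have h2 : HasDerivAt (fun x : ℝ => ∫ t in (0:ℝ)..(x - T), v t) (v (x - T)) x := by
      have := (hG (x - T)).comp x ((hasDerivAt_id x).sub_const T)
      simpa [Function.comp_def] using this
    have h3 : HasDerivAt (fun x : ℝ => ∫ τ in (x - T)..(x + T), v τ)
        (v (x + T) - v (x - T)) x := by
      refine HasDerivAt.congr_of_eventuallyEq (h1.sub h2) ?_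
      filter_upwards with y using (hsplit y)
    have h4 : HasDerivAt F ((1 / 2 : ℝ) * (v (x + T) - v (x - T)) - deriv ft x) x :=
      (h3.const_mul (1 / 2 : ℝ)).sub (hftd x).hasDerivAt
    have h5 : (1 / 2 : ℝ) * (v (x + T) - v (x - T)) - deriv ft x = 0 := by
      rw [hdiff x]; ring
    rwa [h5] at h4
  have hconst : ∀ x : ℝ, F x = F 0 :=
    fun x => is_const_of_deriv_eq_zero (fun y => (hFd y).differentiableAt)
      (fun y => (hFd y).deriv) x 0
  have hF0 : F 0 = 0 := by
    have he : (∫ τ in ((0:ℝ) - T)..((0:ℝ) + T), v τ) = ∫ τ in (-T)..T, u τ := by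
      rw [zero_sub, zero_add]
      apply intervalIntegral.integral_congr
      rw [uIcc_of_le (by linarith : -T ≤ T)]
      intro y hy
      rcases le_or_gt 0 y with h | h
      · have := velA hT hu2 hN1 hv1 y h 0 (by simpa using hy)
        simpa using this
      · have := velB hT hu2 hN2 hv2 y h 0 (by simpa using hy)
        simpa using this
    rw [hF]
    simp only
    rw [he, hu1]
    ring
  intro x
  have hx := hconst x
  rw [hF0] at hx
  have hx0 : (1 / 2 : ℝ) * (∫ τ in (x - T)..(x + T), v τ) - ft x = 0 := hx
  linarith
end

section
/- If v₁ : ℝ → ℝ is C^1 with ∫_{x−T}^{x+T} v₁(τ)dτ = 0 for all x, and ỹ is a C^2 solution of the two-point boundary value problem ỹ_tt − ỹ_xx = 0, ỹ(0,x) = 0, ỹ(T,x) = f̃(x) on [0,T] × ℝ given by ỹ(t,x) = (1/2)∫_{x−t}^{x+t} v(τ)dτ, then z(t,x) = (1/2)∫_{x−t}^{x+t} (v(τ) + v₁(τ))dτ is also a C^2 solution of the same two-point boundary value problem. In particular, the solution of the TBVP is not unique whenever a nonzero such v₁ exists. -/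
open Real Set

/-- Non-uniqueness of the TBVP solution: if `v₁` has vanishing integral over every window of
length `2T`, then adding `v₁` to the initial velocity `v` still gives a C² solution of the
two-point boundary value problem `z_tt - z_xx = 0`, `z(0,x) = 0`, `z(T,x) = f̃ x`. -/
theorem tbvp_nonuniqueness (T : ℝ) (hT : 0 < T) (ft : ℝ → ℝ) (hft : ContDiff ℝ 2 ft)
    (v : ℝ → ℝ) (hv : ContDiff ℝ 1 v)
    (hterm : ∀ x : ℝ, (1 / 2 : ℝ) * ∫ τ in (x - T)..(x + T), v τ = ft x)
    (v₁ : ℝ → ℝ) (hv₁ : ContDiff ℝ 1 v₁)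
    (hint : ∀ x : ℝ, (∫ τ in (x - T)..(x + T), v₁ τ) = 0)
    (z : ℝ → ℝ → ℝ)
    (hz : ∀ t x : ℝ, z t x = (1 / 2 : ℝ) * ∫ τ in (x - t)..(x + t), v τ + v₁ τ) :
    ContDiffOn ℝ 2 (fun p : ℝ × ℝ => z p.1 p.2) (Set.Icc 0 T ×ˢ Set.univ) ∧
    (∀ t ∈ Set.Icc (0:ℝ) T, ∀ x : ℝ,
      deriv (deriv (fun s => z s x)) t - deriv (deriv (fun s => z t s)) x = 0) ∧
    (∀ x : ℝ, z 0 x = 0) ∧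
    (∀ x : ℝ, z T x = ft x) := by
  set w : ℝ → ℝ := fun τ => v τ + v₁ τ with hwdef
  have hw : ContDiff ℝ 1 w := hv.add hv₁
  have hwc : Continuous w := hw.continuous
  set V : ℝ → ℝ := fun y => ∫ τ in (0:ℝ)..y, w τ with hVdef
  have hVd : ∀ y : ℝ, HasDerivAt V (w y) y := fun y =>
    (hwc.integral_hasStrictDerivAt 0 y).hasDerivAt
  have hVderiv : deriv V = w := funext fun y => (hVd y).deriv
  have hV2 : ContDiff ℝ 2 V := by
    rw [show (2 : WithTop ℕ∞) = 1 + 1 by norm_num, contDiff_succ_iff_deriv]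
    refine ⟨fun y => (hVd y).differentiableAt, by simp, ?_⟩
    rw [hVderiv]; exact hw
  -- rewrite z in terms of V
  have hzV : ∀ t x : ℝ, z t x = (1/2 : ℝ) * (V (x + t) - V (x - t)) := by
    intro t x
    rw [hz t x]
    congr 1
    rw [← intervalIntegral.integral_interval_sub_left (hwc.intervalIntegrable _ _)
      (hwc.intervalIntegrable _ _)]
  -- derivatives of w
  have hwd : ∀ y : ℝ, HasDerivAt w (deriv w y) y :=
    fun y => (hw.differentiable one_ne_zero y).hasDerivAt
  refine ⟨?_, ?_, ?_, ?_⟩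
  · -- smoothness
    have : ContDiff ℝ 2 (fun p : ℝ × ℝ => z p.1 p.2) := by
      have h1 : ContDiff ℝ 2 (fun p : ℝ × ℝ =>
          (1/2 : ℝ) * (V (p.2 + p.1) - V (p.2 - p.1))) := by
        exact contDiff_const.mul ((hV2.comp (contDiff_snd.add contDiff_fst)).sub
          (hV2.comp (contDiff_snd.sub contDiff_fst)))
      convert h1 using 1
      funext p
      exact hzV p.1 p.2
    exact this.contDiffOn
  · -- wave equation
    intro t _ x
    have hD1t : deriv (fun s => z s x) = fun s => (1/2 : ℝ) * (w (x + s) + w (x - s)) := by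
      funext s
      have e : (fun s => z s x) = fun s => (1/2 : ℝ) * (V (x + s) - V (x - s)) :=
        funext fun s => hzV s x
      rw [e]
      have h1 : HasDerivAt (fun s : ℝ => V (x + s)) (w (x + s) * 1) s :=
        (hVd (x + s)).comp s ((hasDerivAt_id s).const_add x)
      have h2 : HasDerivAt (fun s : ℝ => V (x - s)) (w (x - s) * (-1)) s :=
        (hVd (x - s)).comp s ((hasDerivAt_id s).const_sub x)
      have := ((h1.sub h2).const_mul (1/2 : ℝ)).deriv
      simp only [Pi.sub_apply] at this
      rw [this]; ring
    have hD1x : deriv (fun s => z t s) = fun s => (1/2 : ℝ) * (w (s + t) - w (s - t)) := by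
      funext s
      have e : (fun s => z t s) = fun s => (1/2 : ℝ) * (V (s + t) - V (s - t)) :=
        funext fun s => hzV t s
      rw [e]
      have h1 : HasDerivAt (fun s : ℝ => V (s + t)) (w (s + t) * 1) s :=
        by rw [mul_one]; exact (hVd (s + t)).comp_add_const s t
      have h2 : HasDerivAt (fun s : ℝ => V (s - t)) (w (s - t) * 1) s :=
        by rw [mul_one]; exact (hVd (s - t)).comp_sub_const s t
      have := ((h1.sub h2).const_mul (1/2 : ℝ)).deriv
      simp only [Pi.sub_apply] at this
      rw [this]; ring
    have hD2t : deriv (deriv (fun s => z s x)) t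
        = (1/2 : ℝ) * (deriv w (x + t) * 1 + deriv w (x - t) * (-1)) := by
      rw [hD1t]
      have h1 : HasDerivAt (fun s : ℝ => w (x + s)) (deriv w (x + t) * 1) t :=
        (hwd (x + t)).comp t ((hasDerivAt_id t).const_add x)
      have h2 : HasDerivAt (fun s : ℝ => w (x - s)) (deriv w (x - t) * (-1)) t :=
        (hwd (x - t)).comp t ((hasDerivAt_id t).const_sub x)
      exact ((h1.add h2).const_mul (1/2 : ℝ)).deriv
    have hD2x : deriv (deriv (fun s => z t s)) x
        = (1/2 : ℝ) * (deriv w (x + t) * 1 - deriv w (x - t) * 1) := by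
      rw [hD1x]
      have h1 : HasDerivAt (fun s : ℝ => w (s + t)) (deriv w (x + t) * 1) x :=
        by rw [mul_one]; exact (hwd (x + t)).comp_add_const x t
      have h2 : HasDerivAt (fun s : ℝ => w (s - t)) (deriv w (x - t) * 1) x :=
        by rw [mul_one]; exact (hwd (x - t)).comp_sub_const x t
      exact ((h1.sub h2).const_mul (1/2 : ℝ)).deriv
    rw [hD2t, hD2x]; ring
  · intro x
    rw [hz 0 x]
    simp
  · intro x
    rw [hz T x]
    rw [intervalIntegral.integral_add (hv.continuous.intervalIntegrable _ _)
      (hv₁.continuous.intervalIntegrable _ _)]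
    rw [hint x, add_zero]
    exact hterm x
end

section
/- Let L > 0 and T > 0 with T/L a positive integer, and suppose y : [0,T] × ℝ → ℝ is a C^2, L-periodic-in-θ solution of y_tt − y_θθ = 0 with y(0,θ) = f(θ) and y(T,θ) = g(θ). Then g(θ) = f(θ) + (1/L)∫_0^L (g(x) − f(x))dx for all θ; i.e., g − f is constant. -/
open Real Set

set_option maxHeartbeats 1000000 in
/-- If `T` is a positive integer multiple of the spatial period `L`, then any `L`-periodic C²
solution of the wave equation with `y(0,·) = f` and `y(T,·) = g` forces
`g(θ) = f(θ) + (1/L)∫₀ᴸ (g - f)`; i.e. `g - f` is constant. -/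
theorem terminal_data_constrained (L T : ℝ) (hL : 0 < L) (hT : 0 < T)
    (hmul : ∃ n : ℕ, 0 < n ∧ T = (n : ℝ) * L)
    (f g : ℝ → ℝ) (y : ℝ → ℝ → ℝ)
    (hy : ContDiffOn ℝ 2 (fun p : ℝ × ℝ => y p.1 p.2) (Set.Icc 0 T ×ˢ Set.univ))
    (hper : ∀ t ∈ Set.Icc (0:ℝ) T, ∀ θ : ℝ, y t (θ + L) = y t θ)
    (hwave : ∀ t ∈ Set.Icc (0:ℝ) T, ∀ θ : ℝ,
      deriv (deriv (fun s => y s θ)) t - deriv (deriv (fun s => y t s)) θ = 0)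
    (hinit : ∀ θ : ℝ, y 0 θ = f θ) (hterm : ∀ θ : ℝ, y T θ = g θ) :
    ∀ θ : ℝ, g θ = f θ + (1 / L) * ∫ x in (0:ℝ)..L, (g x - f x) := by
  obtain ⟨n, hn, hTn⟩ := hmul
  set Y : ℝ × ℝ → ℝ := fun p => y p.1 p.2 with hYdef
  set S : Set (ℝ × ℝ) := Set.Icc 0 T ×ˢ Set.univ with hSdef
  set Ω : Set (ℝ × ℝ) := Set.Ioo 0 T ×ˢ (Set.univ : Set ℝ) with hΩdef
  set W : ℝ × ℝ → (ℝ × ℝ →L[ℝ] ℝ) := fderivWithin ℝ Y S with hWdef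
  have hΩopen : IsOpen Ω := isOpen_Ioo.prod isOpen_univ
  have hΩS : Ω ⊆ S := Set.prod_mono Set.Ioo_subset_Icc_self (subset_rfl)
  have hmemΩ : ∀ t ∈ Set.Ioo (0:ℝ) T, ∀ θ : ℝ, ((t, θ) : ℝ × ℝ) ∈ Ω := by
    intro t ht θ; exact ⟨ht, trivial⟩
  have hmemS : ∀ t ∈ Set.Icc (0:ℝ) T, ∀ θ : ℝ, ((t, θ) : ℝ × ℝ) ∈ S := by
    intro t ht θ; exact ⟨ht, trivial⟩
  have hnhds : ∀ p ∈ Ω, S ∈ nhds p := fun p hp =>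
    Filter.mem_of_superset (hΩopen.mem_nhds hp) hΩS
  have hCD : ∀ p ∈ Ω, ContDiffAt ℝ 2 Y p := fun p hp => hy.contDiffAt (hnhds p hp)
  have hWD : ∀ p ∈ Ω, W p = fderiv ℝ Y p := fun p hp => fderivWithin_of_mem_nhds (hnhds p hp)
  have HD : ∀ p ∈ Ω, HasFDerivAt Y (W p) p := by
    intro p hp
    rw [hWD p hp]
    exact ((hCD p hp).differentiableAt (by norm_num)).hasFDerivAt
  have hWeq : ∀ p ∈ Ω, W =ᶠ[nhds p] fderiv ℝ Y :=
    fun p hp => Filter.eventuallyEq_of_mem (hΩopen.mem_nhds hp) (fun q hq => hWD q hq)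
  have hWdiff : ∀ p ∈ Ω, DifferentiableAt ℝ W p := by
    intro p hp
    have h1 : ContDiffAt ℝ 1 (fderiv ℝ Y) p := (hCD p hp).fderiv_right (by norm_num)
    exact (hWeq p hp).differentiableAt_iff.mpr (h1.differentiableAt one_ne_zero)
  set D2 : ℝ × ℝ → (ℝ × ℝ →L[ℝ] ℝ × ℝ →L[ℝ] ℝ) := fun p => fderiv ℝ W p with hD2def
  have Hd2 : ∀ p ∈ Ω, HasFDerivAt W (D2 p) p := fun p hp => (hWdiff p hp).hasFDerivAt
  have hsymm : ∀ p ∈ Ω, ∀ v w, D2 p v w = D2 p w v := by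
    intro p hp v w
    have hf : ∀ᶠ q in nhds p, HasFDerivAt Y (W q) q :=
      (hΩopen.eventually_mem hp).mono (fun q hq => HD q hq)
    exact second_derivative_symmetric_of_eventually hf (Hd2 p hp) v w
  -- lines
  have hline_t : ∀ (θ t : ℝ), HasDerivAt (fun s : ℝ => ((s, θ) : ℝ × ℝ)) (1, 0) t :=
    fun θ t => HasDerivAt.prodMk (hasDerivAt_id t) (hasDerivAt_const t θ)
  have hline_x : ∀ (t x : ℝ), HasDerivAt (fun s : ℝ => ((t, s) : ℝ × ℝ)) (0, 1) x :=
    fun t x => HasDerivAt.prodMk (hasDerivAt_const x t) (hasDerivAt_id x)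
  -- first derivatives along lines
  have hYt : ∀ (θ : ℝ), ∀ t ∈ Set.Ioo (0:ℝ) T,
      HasDerivAt (fun s => y s θ) (W (t, θ) (1, 0)) t := by
    intro θ t ht
    exact (HD (t, θ) (hmemΩ t ht θ)).comp_hasDerivAt t (hline_t θ t)
  have hYx : ∀ t ∈ Set.Ioo (0:ℝ) T, ∀ x : ℝ,
      HasDerivAt (fun s => y t s) (W (t, x) (0, 1)) x := by
    intro t ht x
    exact (HD (t, x) (hmemΩ t ht x)).comp_hasDerivAt x (hline_x t x)
  -- evaluation CLM helper
  have heval : ∀ (v : ℝ × ℝ) (u : ℝ → (ℝ × ℝ →L[ℝ] ℝ)) (u' : ℝ × ℝ →L[ℝ] ℝ) (t : ℝ),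
      HasDerivAt u u' t → HasDerivAt (fun s => u s v) (u' v) t := by
    intro v u u' t hu
    exact (ContinuousLinearMap.apply ℝ ℝ v).hasFDerivAt.comp_hasDerivAt t hu
  -- second derivatives along lines
  have hYtt : ∀ (θ : ℝ), ∀ t ∈ Set.Ioo (0:ℝ) T,
      deriv (deriv (fun s => y s θ)) t = D2 (t, θ) (1, 0) (1, 0) := by
    intro θ t ht
    have e1 : deriv (fun s => y s θ) =ᶠ[nhds t] fun s => W (s, θ) (1, 0) :=
      Filter.eventuallyEq_of_mem (isOpen_Ioo.mem_nhds ht) (fun s hs => (hYt θ s hs).deriv)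
    rw [Filter.EventuallyEq.deriv_eq e1]
    have h2 : HasDerivAt (fun s : ℝ => W (s, θ)) (D2 (t, θ) (1, 0)) t :=
      (Hd2 (t, θ) (hmemΩ t ht θ)).comp_hasDerivAt t (hline_t θ t)
    exact (heval (1, 0) _ _ t h2).deriv
  have hYxx : ∀ t ∈ Set.Ioo (0:ℝ) T, ∀ x : ℝ,
      deriv (deriv (fun s => y t s)) x = D2 (t, x) (0, 1) (0, 1) := by
    intro t ht x
    have e1 : deriv (fun s => y t s) = fun s => W (t, s) (0, 1) :=
      funext fun s => (hYx t ht s).deriv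
    rw [e1]
    have h2 : HasDerivAt (fun s : ℝ => W (t, s)) (D2 (t, x) (0, 1)) x :=
      (Hd2 (t, x) (hmemΩ t ht x)).comp_hasDerivAt x (hline_x t x)
    exact (heval (0, 1) _ _ x h2).deriv
  -- wave equation in terms of D2
  have hW2 : ∀ t ∈ Set.Ioo (0:ℝ) T, ∀ θ : ℝ,
      D2 (t, θ) (1, 0) (1, 0) = D2 (t, θ) (0, 1) (0, 1) := by
    intro t ht θ
    have := hwave t (Set.Ioo_subset_Icc_self ht) θ
    rw [hYtt θ t ht, hYxx t ht θ] at this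
    linarith
  -- key vanishing of mixed characteristic second derivatives
  have hv1 : ((1:ℝ), (-1:ℝ)) = ((1:ℝ), (0:ℝ)) - ((0:ℝ), (1:ℝ)) := by
    simp [Prod.ext_iff]
  have hv2 : ((1:ℝ), (1:ℝ)) = ((1:ℝ), (0:ℝ)) + ((0:ℝ), (1:ℝ)) := by
    simp [Prod.ext_iff]
  have hkey1 : ∀ t ∈ Set.Ioo (0:ℝ) T, ∀ θ : ℝ, D2 (t, θ) (1, -1) (1, 1) = 0 := by
    intro t ht θ
    rw [hv1, hv2, map_sub]
    simp only [ContinuousLinearMap.sub_apply, map_add]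
    have h1 := hW2 t ht θ
    have h2 := hsymm (t, θ) (hmemΩ t ht θ) (1, 0) (0, 1)
    linarith
  have hkey2 : ∀ t ∈ Set.Ioo (0:ℝ) T, ∀ θ : ℝ, D2 (t, θ) (1, 1) (1, -1) = 0 := by
    intro t ht θ
    rw [hv1, hv2, map_add]
    simp only [ContinuousLinearMap.add_apply, map_sub]
    have h1 := hW2 t ht θ
    have h2 := hsymm (t, θ) (hmemΩ t ht θ) (1, 0) (0, 1)
    linarith
  -- constancy along characteristics
  have hconst_aux : ∀ (φ : ℝ → ℝ), (∀ s ∈ Set.Ioo (0:ℝ) T, HasDerivAt φ 0 s) →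
      ∀ t ∈ Set.Ioo (0:ℝ) T, ∀ t' ∈ Set.Ioo (0:ℝ) T, φ t = φ t' := by
    intro φ hφ t ht t' ht'
    have hsub : Set.uIcc t t' ⊆ Set.Ioo 0 T := Set.ordConnected_Ioo.uIcc_subset ht ht'
    have := intervalIntegral.integral_eq_sub_of_hasDerivAt
      (f := φ) (f' := fun _ => (0:ℝ)) (a := t) (b := t')
      (fun x hx => hφ x (hsub hx)) intervalIntegrable_const
    simp only [intervalIntegral.integral_const, smul_zero] at this
    linarith
  have hT2 : T / 2 ∈ Set.Ioo (0:ℝ) T := ⟨by linarith, by linarith⟩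
  -- characteristic constancy
  have hchar1 : ∀ (c : ℝ), ∀ t ∈ Set.Ioo (0:ℝ) T,
      W (t, c - t) (1, 1) = W (T / 2, c - T / 2) (1, 1) := by
    intro c t ht
    have hγ : ∀ s : ℝ, HasDerivAt (fun s : ℝ => ((s, c - s) : ℝ × ℝ)) (1, -1) s := by
      intro s
      exact HasDerivAt.prodMk (hasDerivAt_id s) ((hasDerivAt_id s).const_sub c)
    have hφ : ∀ s ∈ Set.Ioo (0:ℝ) T,
        HasDerivAt (fun s => W (s, c - s) ((1:ℝ), (1:ℝ))) 0 s := by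
      intro s hs
      have h2 : HasDerivAt (fun s : ℝ => W (s, c - s)) (D2 (s, c - s) (1, -1)) s :=
        (Hd2 (s, c - s) (hmemΩ s hs (c - s))).comp_hasDerivAt s (hγ s)
      have h3 := heval (1, 1) _ _ s h2
      rwa [hkey1 s hs (c - s)] at h3
    exact hconst_aux _ hφ t ht (T / 2) hT2
  have hchar2 : ∀ (c : ℝ), ∀ t ∈ Set.Ioo (0:ℝ) T,
      W (t, c + t) (1, -1) = W (T / 2, c + T / 2) (1, -1) := by
    intro c t ht
    have hγ : ∀ s : ℝ, HasDerivAt (fun s : ℝ => ((s, c + s) : ℝ × ℝ)) (1, 1) s := by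
      intro s
      exact HasDerivAt.prodMk (hasDerivAt_id s) ((hasDerivAt_id s).const_add c)
    have hφ : ∀ s ∈ Set.Ioo (0:ℝ) T,
        HasDerivAt (fun s => W (s, c + s) ((1:ℝ), (-1:ℝ))) 0 s := by
      intro s hs
      have h2 : HasDerivAt (fun s : ℝ => W (s, c + s)) (D2 (s, c + s) (1, 1)) s :=
        (Hd2 (s, c + s) (hmemΩ s hs (c + s))).comp_hasDerivAt s (hγ s)
      have h3 := heval (1, -1) _ _ s h2
      rwa [hkey2 s hs (c + s)] at h3
    exact hconst_aux _ hφ t ht (T / 2) hT2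
  -- periodicity of W in the second variable
  have hWper : ∀ t ∈ Set.Ioo (0:ℝ) T, ∀ θ : ℝ, W (t, θ + L) = W (t, θ) := by
    intro t ht θ
    have hpΩ : ((t, θ) : ℝ × ℝ) ∈ Ω := hmemΩ t ht θ
    have hpΩ' : ((t, θ + L) : ℝ × ℝ) ∈ Ω := hmemΩ t ht (θ + L)
    have hτ : HasFDerivAt (fun p : ℝ × ℝ => p + ((0:ℝ), L)) (ContinuousLinearMap.id ℝ (ℝ × ℝ))
        (t, θ) := (hasFDerivAt_id _).add_const _
    have hcomp : HasFDerivAt (fun p : ℝ × ℝ => Y (p + ((0:ℝ), L))) (W (t, θ + L)) (t, θ) := by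
      have heq : ((t, θ) : ℝ × ℝ) + ((0:ℝ), L) = (t, θ + L) := by simp
      have hYd : HasFDerivAt Y (W (t, θ + L)) ((t, θ) + ((0:ℝ), L)) := by
        rw [heq]; exact HD _ hpΩ'
      have := hYd.comp (t, θ) hτ
      exact this
    have hee : (fun p : ℝ × ℝ => Y (p + ((0:ℝ), L))) =ᶠ[nhds ((t, θ) : ℝ × ℝ)] Y := by
      refine Filter.eventuallyEq_of_mem (hΩopen.mem_nhds hpΩ) ?_
      rintro ⟨s, x⟩ hq
      have := hper s (Set.Ioo_subset_Icc_self hq.1) x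
      simpa [hYdef] using this
    exact (hcomp.congr_of_eventuallyEq hee.symm).unique (HD (t, θ) hpΩ)
  -- continuity of W on S
  have hUD : UniqueDiffOn ℝ S := (uniqueDiffOn_Icc hT).prod uniqueDiffOn_univ
  have hWcont : ContinuousOn W S := hy.continuousOn_fderivWithin hUD one_le_two
  -- the characteristic data functions
  set P : ℝ → ℝ := fun c => W (T / 2, c - T / 2) (1, 1) with hPdef
  set Q : ℝ → ℝ := fun c => W (T / 2, c + T / 2) (1, -1) with hQdef
  have hPcont : Continuous P := by
    have h1 : Continuous fun c : ℝ => W (T / 2, c - T / 2) :=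
      hWcont.comp_continuous (continuous_const.prodMk (continuous_id.sub continuous_const))
        (fun c => hmemS _ (Set.Ioo_subset_Icc_self hT2) _)
    exact ((ContinuousLinearMap.apply ℝ ℝ ((1:ℝ), (1:ℝ))).continuous).comp h1
  have hQcont : Continuous Q := by
    have h1 : Continuous fun c : ℝ => W (T / 2, c + T / 2) :=
      hWcont.comp_continuous (continuous_const.prodMk (continuous_id.add continuous_const))
        (fun c => hmemS _ (Set.Ioo_subset_Icc_self hT2) _)
    exact ((ContinuousLinearMap.apply ℝ ℝ ((1:ℝ), (-1:ℝ))).continuous).comp h1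
  have hPper : Function.Periodic P L := by
    intro c
    have : c + L - T / 2 = c - T / 2 + L := by ring
    simp only [hPdef, this, hWper (T / 2) hT2 (c - T / 2)]
  have hQper : Function.Periodic Q L := by
    intro c
    have : c + L + T / 2 = c + T / 2 + L := by ring
    simp only [hQdef, this, hWper (T / 2) hT2 (c + T / 2)]
  have hPT : Function.Periodic P T := by rw [hTn]; exact hPper.nat_mul n
  have hQT : Function.Periodic Q T := by rw [hTn]; exact hQper.nat_mul n
  -- representation of y_t via P and Q
  have hrep : ∀ (θ : ℝ), ∀ t ∈ Set.Ioo (0:ℝ) T,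
      W (t, θ) (1, 0) = (P (θ + t) + Q (θ - t)) / 2 := by
    intro θ t ht
    have h1 : P (θ + t) = W (t, θ) (1, 1) := by
      have := hchar1 (θ + t) t ht
      simp only [hPdef]
      rw [← this]
      norm_num
    have h2 : Q (θ - t) = W (t, θ) (1, -1) := by
      have := hchar2 (θ - t) t ht
      simp only [hQdef]
      rw [← this]
      norm_num
    rw [h1, h2]
    have hsum : ((1:ℝ), (1:ℝ)) + ((1:ℝ), (-1:ℝ)) = (2 : ℝ) • ((1:ℝ), (0:ℝ)) := by
      simp [Prod.ext_iff]; norm_num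
    have := map_add (W (t, θ)) ((1:ℝ), (1:ℝ)) ((1:ℝ), (-1:ℝ))
    rw [hsum, map_smul] at this
    simp only [smul_eq_mul] at this
    linarith
  -- FTC : the time integral of y_t equals g - f
  have hFTC : ∀ θ : ℝ, (∫ t in (0:ℝ)..T, W (t, θ) (1, 0)) = g θ - f θ := by
    intro θ
    have hcont : ContinuousOn (fun s => y s θ) (Set.Icc 0 T) := by
      have := hy.continuousOn.comp
        (Continuous.continuousOn (continuous_id.prodMk continuous_const))
        (fun s hs => hmemS s hs θ)
      exact this
    have hint : IntervalIntegrable (fun t => W (t, θ) (1, 0)) MeasureTheory.volume 0 T := by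
      apply ContinuousOn.intervalIntegrable
      rw [Set.uIcc_of_le hT.le]
      have h1 : ContinuousOn (fun t : ℝ => W (t, θ)) (Set.Icc 0 T) :=
        hWcont.comp (Continuous.continuousOn (continuous_id.prodMk continuous_const))
          (fun s hs => hmemS s hs θ)
      exact ((ContinuousLinearMap.apply ℝ ℝ ((1:ℝ), (0:ℝ))).continuous).comp_continuousOn h1
    have := intervalIntegral.integral_eq_sub_of_hasDerivAt_of_le hT.le hcont
      (fun t ht => hYt θ t ht) hint
    rw [this, hterm θ, hinit θ]
  -- the integral is independent of θ
  have hIconst : ∀ θ : ℝ, (∫ t in (0:ℝ)..T, W (t, θ) (1, 0)) =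
      ((∫ u in (0:ℝ)..(0 + T), P u) + ∫ u in (0:ℝ)..(0 + T), Q u) / 2 := by
    intro θ
    have hae : ∀ᵐ x ∂MeasureTheory.volume, x ∈ Set.uIoc (0:ℝ) T →
        W (x, θ) (1, 0) = (P (θ + x) + Q (θ - x)) / 2 := by
      have hne : ∀ᵐ x : ℝ ∂MeasureTheory.volume, x ≠ T := by
        have : MeasureTheory.volume ({T} : Set ℝ) = 0 := MeasureTheory.measure_singleton T
        exact MeasureTheory.measure_eq_zero_iff_ae_notMem.mp this
      filter_upwards [hne] with x hx hxI
      rw [Set.uIoc_of_le hT.le] at hxI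
      exact hrep θ x ⟨hxI.1, lt_of_le_of_ne hxI.2 hx⟩
    rw [intervalIntegral.integral_congr_ae hae]
    have hPint : IntervalIntegrable (fun t => P (θ + t)) MeasureTheory.volume 0 T :=
      (hPcont.comp (continuous_const.add continuous_id)).intervalIntegrable 0 T
    have hQint : IntervalIntegrable (fun t => Q (θ - t)) MeasureTheory.volume 0 T :=
      (hQcont.comp (continuous_const.sub continuous_id)).intervalIntegrable 0 T
    have hsplit : (∫ t in (0:ℝ)..T, (P (θ + t) + Q (θ - t)) / 2) =
        ((∫ t in (0:ℝ)..T, P (θ + t)) + ∫ t in (0:ℝ)..T, Q (θ - t)) / 2 := by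
      rw [intervalIntegral.integral_div, intervalIntegral.integral_add hPint hQint]
    rw [hsplit]
    have e1 : (∫ t in (0:ℝ)..T, P (θ + t)) = ∫ u in (0:ℝ)..(0 + T), P u := by
      rw [intervalIntegral.integral_comp_add_left P θ]
      simp only [add_zero]
      rw [hPT.intervalIntegral_add_eq θ 0]
    have e2 : (∫ t in (0:ℝ)..T, Q (θ - t)) = ∫ u in (0:ℝ)..(0 + T), Q u := by
      rw [intervalIntegral.integral_comp_sub_left Q θ]
      have : θ - 0 = (θ - T) + T := by ring
      rw [this]
      rw [hQT.intervalIntegral_add_eq (θ - T) 0]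
    rw [e1, e2]
  have hgf : ∀ θ : ℝ, g θ - f θ = g 0 - f 0 := by
    intro θ
    rw [← hFTC θ, ← hFTC 0, hIconst θ, hIconst 0]
  -- conclude
  intro θ
  have hInt : (∫ x in (0:ℝ)..L, (g x - f x)) = ∫ x in (0:ℝ)..L, (g 0 - f 0) := by
    apply intervalIntegral.integral_congr
    intro x _
    exact hgf x
  rw [hInt, intervalIntegral.integral_const]
  have hgθ := hgf θ
  have hLne : L ≠ 0 := ne_of_gt hL
  field_simp
  simp only [sub_zero, smul_eq_mul]
  linear_combination L * hgθ
end
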